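/- Decay for the modulated non-autonomous linearized Toda equation: Let c₀ > 1, a ∈ (0, 2κ(c₀)), b ∈ (0, c₀a − 2 sinh(a/2)), and let K be the constant of the linearized decay estimate for these c₀, a, b. Let 0 ≤ T ≤ ∞ and let γ ∈ C¹([0,T];ℝ) with γ̇(t) ≥ 1/2 for all t ∈ [0,T]. Let 0 ≤ τ ≤ T, let φ ∈ ℓ²_a satisfy ⟨φ, J⁻¹u̇_{c₀}(γ(τ))⟩ = 0 and ⟨φ, J⁻¹∂_c u_{c₀}(γ(τ))⟩ = 0, and let v = (r,p) : [τ,T] → ℓ²_a be the C¹ solution of ∂_t r(t,n) = γ̇(t)(p(t,n+1) − p(t,n)), ∂_t p(t,n) = γ̇(t)( e^{−r̃_{c₀}(n−c₀γ(t))} r(t,n) − e^{−r̃_{c₀}(n−1−c₀γ(t))} r(t,n−1) ) with v(τ) = φ. Then e^{−ac₀γ(t)} ‖v(t)‖_{ℓ²_a} ≤ K e^{−b(t−τ)/2} e^{−ac₀γ(τ)} ‖φ‖_{ℓ²_a} for all τ ≤ t ≤ T. -/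

import Mathlib

open Real Filter Set MeasureTheory

namespace TodaPaper

noncomputable section

/-- The squared Euclidean norm on `ℝ × ℝ`. -/
def nsq (w : ℝ × ℝ) : ℝ := w.1 ^ 2 + w.2 ^ 2

/-- Membership in `ℓ²(ℤ; ℝ²)`. -/
def Meml2 (u : ℤ → ℝ × ℝ) : Prop := Summable fun n : ℤ => nsq (u n)

/-- The `ℓ²(ℤ; ℝ²)` norm. -/
def l2norm (u : ℤ → ℝ × ℝ) : ℝ := Real.sqrt (∑' n : ℤ, nsq (u n))

/-- Membership in the exponentially weighted space `ℓ²_a`. -/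
def Meml2w (a : ℝ) (u : ℤ → ℝ × ℝ) : Prop :=
  Summable fun n : ℤ => Real.exp (2 * a * n) * nsq (u n)

/-- The `ℓ²_a` norm. -/
def wnorm (a : ℝ) (u : ℤ → ℝ × ℝ) : ℝ :=
  Real.sqrt (∑' n : ℤ, Real.exp (2 * a * n) * nsq (u n))

/-- The Toda potential `V(r) = e^{-r} - 1 + r`. -/
def V (r : ℝ) : ℝ := Real.exp (-r) - 1 + r

/-- Derivative of the Toda potential, `V'(r) = 1 - e^{-r}`. -/
def V' (r : ℝ) : ℝ := 1 - Real.exp (-r)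

/-- `u = (r, p)` is a solution of the Toda lattice. -/
structure IsTodaSolution (u : ℝ → ℤ → ℝ × ℝ) : Prop where
  mem : ∀ t, Meml2 (u t)
  dr : ∀ t n, HasDerivAt (fun s => (u s n).1) ((u t (n + 1)).2 - (u t n).2) t
  dp : ∀ t n, HasDerivAt (fun s => (u s n).2) (V' (u t n).1 - V' (u t (n - 1)).1) t

/-- The decay rate `κ(c)`, the (unique, for `c > 1`) positive root of `sinh κ = c κ`. -/
def kappa (c : ℝ) : ℝ := Classical.epsilon fun k : ℝ => 0 < k ∧ Real.sinh k = c * k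

/-- The soliton displacement profile `q̃_c`. -/
def qt (c x : ℝ) : ℝ := Real.log (Real.cosh (kappa c * (x - 1)) / Real.cosh (kappa c * x))

/-- The soliton momentum profile `p̃_c = -c q̃_c'`. -/
def ptil (c : ℝ) : ℝ → ℝ := fun x => -c * deriv (qt c) x

/-- The soliton relative-displacement profile `r̃_c(x) = q̃_c(x+1) - q̃_c(x)`. -/
def rtil (c : ℝ) : ℝ → ℝ := fun x => qt c (x + 1) - qt c x

/-- The soliton profile `ũ_c = (r̃_c, p̃_c)`. -/
def solProfile (c : ℝ) (x : ℝ) : ℝ × ℝ := (rtil c x, ptil c x)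

/-- The soliton `u_c(γ)(n) = ũ_c(n - cγ)`. -/
def uc (c γ : ℝ) : ℤ → ℝ × ℝ := fun n => solProfile c ((n : ℝ) - c * γ)

/-- The neutral mode `u̇_c(γ)(n) = -c ũ_c'(n - cγ)`. -/
def ucDot (c γ : ℝ) : ℤ → ℝ × ℝ := fun n => (-c) • deriv (solProfile c) ((n : ℝ) - c * γ)

/-- The neutral mode `∂_c u_c(γ)(n)`. -/
def ucDc (c γ : ℝ) : ℤ → ℝ × ℝ := fun n => deriv (fun c' => solProfile c' ((n : ℝ) - c' * γ)) c

/-- The `ℓ²` pairing `⟨u, v⟩ = Σ_n (u₁ v₁ + u₂ v₂)`. -/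
def pairing (u v : ℤ → ℝ × ℝ) : ℝ := ∑' n : ℤ, ((u n).1 * (v n).1 + (u n).2 * (v n).2)

/-- The operator `J⁻¹ : (r,p) ↦ (Σ_{k=0}^∞ p(·-k), Σ_{k=1}^∞ r(·-k))`. -/
def Jinv (u : ℤ → ℝ × ℝ) : ℤ → ℝ × ℝ := fun n =>
  (∑' k : ℕ, (u (n - (k : ℤ))).2, ∑' k : ℕ, (u (n - 1 - (k : ℤ))).1)

/-- `v` solves the Toda lattice linearized along the 1-soliton `u_{c₀}` for `t ≥ τ`. -/
def IsLinTodaSol (c₀ τ : ℝ) (v : ℝ → ℤ → ℝ × ℝ) : Prop :=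
  ∀ t : ℝ, τ ≤ t → ∀ n : ℤ,
    HasDerivAt (fun s => (v s n).1) ((v t (n + 1)).2 - (v t n).2) t ∧
    HasDerivAt (fun s => (v s n).2)
      (Real.exp (-(rtil c₀ ((n : ℝ) - c₀ * t))) * (v t n).1
        - Real.exp (-(rtil c₀ ((n : ℝ) - 1 - c₀ * t))) * (v t (n - 1)).1) t

/-- The linearized decay estimate with rate `b` and constant `K` in `ℓ²_a`,
for the linearization along the 1-soliton of speed `c₀`. -/
def LinDecayEst (c₀ a b K : ℝ) : Prop :=
  ∀ (τ : ℝ) (v : ℝ → ℤ → ℝ × ℝ), IsLinTodaSol c₀ τ v →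
    (∀ t : ℝ, τ ≤ t → Meml2w a (v t)) →
    pairing (v τ) (Jinv (ucDot c₀ τ)) = 0 →
    pairing (v τ) (Jinv (ucDc c₀ τ)) = 0 →
    ∀ t : ℝ, τ ≤ t →
      Real.exp (-(a * c₀ * (t - τ))) * wnorm a (v t) ≤
        K * Real.exp (-(b * (t - τ))) * wnorm a (v τ)

/-! ### Auxiliary material for Statement 5 -/

open scoped Topology

section Aux

/-- The coefficient appearing in the linearized Toda equation. -/
def coef (c₀ x : ℝ) : ℝ := Real.exp (-(rtil c₀ x))

lemma coef_pos (c₀ x : ℝ) : 0 < coef c₀ x := Real.exp_pos _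

/-- A uniform bound for `coef`. -/
def Cb (c₀ : ℝ) : ℝ := Real.exp (2 * |kappa c₀|)

lemma one_le_Cb (c₀ : ℝ) : 1 ≤ Cb c₀ := Real.one_le_exp (by positivity)

lemma abs_sinh_le_cosh (x : ℝ) : |Real.sinh x| ≤ Real.cosh x := by
  nlinarith [Real.cosh_sq_sub_sinh_sq x, Real.cosh_pos x, sq_abs (Real.sinh x),
    abs_nonneg (Real.sinh x)]

lemma cosh_shift_le (u v : ℝ) : Real.cosh (u + v) ≤ Real.cosh u * Real.exp |v| := by
  have h1 : |Real.sinh u| ≤ Real.cosh u := abs_sinh_le_cosh u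
  have h2 : |Real.sinh v| = Real.sinh |v| := by
    rcases abs_cases v with ⟨h, _⟩ | ⟨h, hv⟩
    · rw [h]; rw [abs_of_nonneg (Real.sinh_nonneg_iff.2 (h ▸ abs_nonneg v))]
    · rw [h, Real.sinh_neg, abs_of_nonpos (by simpa using Real.sinh_le_sinh.2 hv.le)]
  have h3 : Real.cosh v = Real.cosh |v| := (Real.cosh_abs v).symm
  have h4 : Real.cosh |v| + Real.sinh |v| = Real.exp |v| := Real.cosh_add_sinh |v|
  have h5 : Real.sinh u * Real.sinh v ≤ |Real.sinh u| * |Real.sinh v| := by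
    calc Real.sinh u * Real.sinh v ≤ |Real.sinh u * Real.sinh v| := le_abs_self _
    _ = |Real.sinh u| * |Real.sinh v| := abs_mul _ _
  have h6 : Real.cosh u > 0 := Real.cosh_pos u
  rw [Real.cosh_add]
  nlinarith [abs_nonneg (Real.sinh v)]

lemma exp_qt (c₀ y : ℝ) :
    Real.exp (qt c₀ y) = Real.cosh (kappa c₀ * (y - 1)) / Real.cosh (kappa c₀ * y) :=
  Real.exp_log (div_pos (Real.cosh_pos _) (Real.cosh_pos _))

lemma coef_eq (c₀ x : ℝ) :
    coef c₀ x = Real.cosh (kappa c₀ * (x - 1)) * Real.cosh (kappa c₀ * (x + 1)) /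
      (Real.cosh (kappa c₀ * x) * Real.cosh (kappa c₀ * x)) := by
  have h1 : coef c₀ x = Real.exp (qt c₀ x) / Real.exp (qt c₀ (x + 1)) := by
    rw [coef, rtil, neg_sub, Real.exp_sub]
  rw [h1, exp_qt, exp_qt]
  have e1 : kappa c₀ * (x + 1 - 1) = kappa c₀ * x := by ring
  rw [e1]
  have c1 := (Real.cosh_pos (kappa c₀ * (x - 1))).ne'
  have c2 := (Real.cosh_pos (kappa c₀ * x)).ne'
  have c3 := (Real.cosh_pos (kappa c₀ * (x + 1))).ne'
  field_simp

lemma coef_le (c₀ x : ℝ) : coef c₀ x ≤ Cb c₀ := by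
  rw [coef_eq]
  set κ := kappa c₀
  have h1 : Real.cosh (κ * (x - 1)) ≤ Real.cosh (κ * x) * Real.exp |κ| := by
    have : κ * (x - 1) = κ * x + -κ := by ring
    rw [this]
    simpa [abs_neg] using cosh_shift_le (κ * x) (-κ)
  have h2 : Real.cosh (κ * (x + 1)) ≤ Real.cosh (κ * x) * Real.exp |κ| := by
    have : κ * (x + 1) = κ * x + κ := by ring
    rw [this]; exact cosh_shift_le (κ * x) κ
  have hc : (0:ℝ) < Real.cosh (κ * x) := Real.cosh_pos _
  have hexp : (0:ℝ) < Real.exp |κ| := Real.exp_pos _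
  rw [div_le_iff₀ (by positivity)]
  have : Cb c₀ = Real.exp |κ| * Real.exp |κ| := by
    rw [Cb, ← Real.exp_add]; ring_nf; rfl
  rw [this]
  nlinarith [Real.cosh_pos (κ * (x - 1)), Real.cosh_pos (κ * (x + 1))]

end Aux

section Deriv

/-- `κ tanh(κ(y-e))`, written with `sinh/cosh`. -/
def gq (c₀ e y : ℝ) : ℝ :=
  kappa c₀ * (Real.sinh (kappa c₀ * (y - e)) / Real.cosh (kappa c₀ * (y - e)))

lemma abs_gq_le (c₀ e y : ℝ) : |gq c₀ e y| ≤ |kappa c₀| := by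
  rw [gq, abs_mul]
  have h : |Real.sinh (kappa c₀ * (y - e)) / Real.cosh (kappa c₀ * (y - e))| ≤ 1 := by
    rw [abs_div, abs_of_pos (Real.cosh_pos _)]
    exact div_le_one_of_le₀ (abs_sinh_le_cosh _) (Real.cosh_pos _).le
  calc |kappa c₀| * |_ / _| ≤ |kappa c₀| * 1 :=
        mul_le_mul_of_nonneg_left h (abs_nonneg _)
    _ = |kappa c₀| := mul_one _

lemma hasDerivAt_log_cosh (c₀ e y : ℝ) :
    HasDerivAt (fun x => Real.log (Real.cosh (kappa c₀ * (x - e)))) (gq c₀ e y) y := by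
  have hin : HasDerivAt (fun x : ℝ => kappa c₀ * (x - e)) (kappa c₀) y := by
    simpa using ((hasDerivAt_id y).sub_const e).const_mul (kappa c₀)
  have hcosh := (Real.hasDerivAt_cosh (kappa c₀ * (y - e))).comp y hin
  have hlog := (Real.hasDerivAt_log (Real.cosh_pos (kappa c₀ * (y - e))).ne').comp y hcosh
  convert hlog using 1 <;> try rfl
  rw [gq]
  field_simp

lemma hasDerivAt_qt (c₀ y : ℝ) :
    HasDerivAt (qt c₀) (gq c₀ 1 y - gq c₀ 0 y) y := by
  have hq : qt c₀ = fun x =>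
      Real.log (Real.cosh (kappa c₀ * (x - 1))) - Real.log (Real.cosh (kappa c₀ * (x - 0))) := by
    funext x
    rw [qt, Real.log_div (Real.cosh_pos _).ne' (Real.cosh_pos _).ne', sub_zero]
  rw [hq]
  exact (hasDerivAt_log_cosh c₀ 1 y).sub (hasDerivAt_log_cosh c₀ 0 y)

/-- Derivative of `rtil`. -/
def rtild (c₀ x : ℝ) : ℝ :=
  (gq c₀ 1 (x + 1) - gq c₀ 0 (x + 1)) - (gq c₀ 1 x - gq c₀ 0 x)

lemma hasDerivAt_rtil (c₀ x : ℝ) : HasDerivAt (rtil c₀) (rtild c₀ x) x := by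
  have h1 : HasDerivAt (fun x => qt c₀ (x + 1)) (gq c₀ 1 (x + 1) - gq c₀ 0 (x + 1)) x := by
    convert (hasDerivAt_qt c₀ (x + 1)).comp x ((hasDerivAt_id x).add_const 1) using 1 <;> try rfl
    ring
  have := h1.sub (hasDerivAt_qt c₀ x)
  exact this

lemma abs_rtild_le (c₀ x : ℝ) : |rtild c₀ x| ≤ 4 * |kappa c₀| := by
  have h1 := abs_le.1 (abs_gq_le c₀ 1 (x + 1))
  have h2 := abs_le.1 (abs_gq_le c₀ 0 (x + 1))
  have h3 := abs_le.1 (abs_gq_le c₀ 1 x)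
  have h4 := abs_le.1 (abs_gq_le c₀ 0 x)
  rw [rtild]
  rw [abs_le]
  constructor <;> [linarith; linarith]

/-- Derivative of `coef`. -/
def coefd (c₀ x : ℝ) : ℝ := Real.exp (-(rtil c₀ x)) * -(rtild c₀ x)

lemma hasDerivAt_coef (c₀ x : ℝ) : HasDerivAt (coef c₀) (coefd c₀ x) x := by
  have h := (Real.hasDerivAt_exp (-(rtil c₀ x))).comp x (hasDerivAt_rtil c₀ x).neg
  have heq : coef c₀ = Real.exp ∘ fun x => -(rtil c₀ x) := by
    funext x; simp [coef, Function.comp]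
  rw [heq, coefd]
  exact h

/-- Lipschitz constant of `coef`. -/
def Lc (c₀ : ℝ) : ℝ := 4 * |kappa c₀| * Cb c₀

lemma Lc_nonneg (c₀ : ℝ) : 0 ≤ Lc c₀ :=
  mul_nonneg (by positivity) (le_trans zero_le_one (one_le_Cb c₀))

lemma abs_coefd_le (c₀ x : ℝ) : |coefd c₀ x| ≤ Lc c₀ := by
  rw [coefd, abs_mul, abs_neg]
  have h1 : |Real.exp (-(rtil c₀ x))| ≤ Cb c₀ := by
    rw [abs_of_pos (Real.exp_pos _)]
    exact coef_le c₀ x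
  have h2 := abs_rtild_le c₀ x
  have := mul_le_mul h1 h2 (abs_nonneg _) (le_trans zero_le_one (one_le_Cb c₀))
  rw [Lc]
  nlinarith [abs_nonneg (rtild c₀ x), abs_nonneg (Real.exp (-(rtil c₀ x)))]

lemma coef_lip (c₀ x y : ℝ) : |coef c₀ x - coef c₀ y| ≤ Lc c₀ * |x - y| := by
  have h := convex_univ.norm_image_sub_le_of_norm_hasDerivWithin_le
    (f := coef c₀) (f' := coefd c₀) (C := Lc c₀)
    (fun z _ => (hasDerivAt_coef c₀ z).hasDerivWithinAt)
    (fun z _ => by rw [Real.norm_eq_abs]; exact abs_coefd_le c₀ z)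
    (Set.mem_univ y) (Set.mem_univ x)
  simpa [Real.norm_eq_abs] using h

end Deriv

section Space

lemma nsq_nonneg (w : ℝ × ℝ) : 0 ≤ nsq w := add_nonneg (sq_nonneg _) (sq_nonneg _)

lemma sq_norm_le_nsq (w : ℝ × ℝ) : ‖w‖ ^ 2 ≤ nsq w := by
  have h : ‖w‖ = max |w.1| |w.2| := by
    rw [Prod.norm_def, Real.norm_eq_abs, Real.norm_eq_abs]
  rw [h, nsq]
  rcases max_cases |w.1| |w.2| with ⟨h1, _⟩ | ⟨h1, _⟩ <;> rw [h1] <;>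
    nlinarith [sq_abs w.1, sq_abs w.2, sq_nonneg w.1, sq_nonneg w.2]

lemma nsq_le_two_sq_norm (w : ℝ × ℝ) : nsq w ≤ 2 * ‖w‖ ^ 2 := by
  have h1 : |w.1| ≤ ‖w‖ := by rw [← Real.norm_eq_abs]; exact norm_fst_le w
  have h2 : |w.2| ≤ ‖w‖ := by rw [← Real.norm_eq_abs]; exact norm_snd_le w
  rw [nsq]
  nlinarith [sq_abs w.1, sq_abs w.2, abs_nonneg w.1, abs_nonneg w.2, norm_nonneg w]

lemma memℓp_two_iff (f : ℤ → ℝ × ℝ) :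
    Memℓp f 2 ↔ Summable (fun n => ‖f n‖ ^ (2:ℕ)) := by
  rw [memℓp_gen_iff (by norm_num : (0:ℝ) < (2:ENNReal).toReal)]
  have he : (fun n : ℤ => ‖f n‖ ^ (2:ENNReal).toReal) = fun n => ‖f n‖ ^ (2:ℕ) := by
    funext n
    rw [show (2:ENNReal).toReal = ((2:ℕ):ℝ) by norm_num, Real.rpow_natCast]
  rw [he]

/-- Weighting a sequence. -/
def wt (a : ℝ) (f : ℤ → ℝ × ℝ) : ℤ → ℝ × ℝ := fun n => Real.exp (a * n) • f n

/-- Unweighting a sequence. -/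
def unwt (a : ℝ) (f : ℤ → ℝ × ℝ) : ℤ → ℝ × ℝ := fun n => Real.exp (-(a * n)) • f n

lemma wt_unwt (a : ℝ) (f : ℤ → ℝ × ℝ) : wt a (unwt a f) = f := by
  funext n
  simp [wt, unwt, smul_smul, ← Real.exp_add]

lemma unwt_wt (a : ℝ) (f : ℤ → ℝ × ℝ) : unwt a (wt a f) = f := by
  funext n
  simp [wt, unwt, smul_smul, ← Real.exp_add]

lemma sq_norm_wt (a : ℝ) (f : ℤ → ℝ × ℝ) (n : ℤ) :
    ‖wt a f n‖ ^ (2:ℕ) = Real.exp (2 * a * n) * ‖f n‖ ^ (2:ℕ) := by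
  rw [wt]
  rw [norm_smul, Real.norm_eq_abs, abs_of_pos (Real.exp_pos _), mul_pow,
    pow_two (Real.exp (a * n)), ← Real.exp_add, show a * n + a * n = 2 * a * n by ring]

lemma meml2w_iff (a : ℝ) (f : ℤ → ℝ × ℝ) : Meml2w a f ↔ Memℓp (wt a f) 2 := by
  rw [memℓp_two_iff]
  constructor
  · intro h
    apply Summable.of_nonneg_of_le (fun n => by positivity) (fun n => ?_) h
    rw [sq_norm_wt]
    exact mul_le_mul_of_nonneg_left (sq_norm_le_nsq (f n)) (Real.exp_pos _).le
  · intro h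
    apply Summable.of_nonneg_of_le
      (fun n => mul_nonneg (Real.exp_pos _).le (nsq_nonneg _)) (fun n => ?_) (h.mul_left 2)
    have : 2 * ‖wt a f n‖ ^ (2:ℕ) = Real.exp (2 * a * n) * (2 * ‖f n‖ ^ (2:ℕ)) := by
      rw [sq_norm_wt]; ring
    rw [this]
    exact mul_le_mul_of_nonneg_left (nsq_le_two_sq_norm (f n)) (Real.exp_pos _).le

/-- The Banach space in which the weighted solution lives. -/
abbrev Eh : Type := lp (fun _ : ℤ => ℝ × ℝ) 2

lemma meml2w_unwt (a : ℝ) (g : Eh) : Meml2w a (unwt a ⇑g) := by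
  rw [meml2w_iff, wt_unwt]
  exact lp.memℓp g

/-- Packaging a weighted sequence as an element of `Eh`. -/
def toEh (a : ℝ) (f : ℤ → ℝ × ℝ) (h : Meml2w a f) : Eh :=
  ⟨wt a f, (meml2w_iff a f).1 h⟩

lemma unwt_toEh (a : ℝ) (f : ℤ → ℝ × ℝ) (h : Meml2w a f) : unwt a ⇑(toEh a f h) = f := by
  rw [toEh]
  exact unwt_wt a f

end Space

section Operator

/-- The (weighted-coordinates) linearized Toda vector field, on plain sequences. -/
def LmapFun (c₀ a s : ℝ) (f : ℤ → ℝ × ℝ) : ℤ → ℝ × ℝ := fun n =>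
  (Real.exp (-a) * (f (n + 1)).2 - (f n).2,
   coef c₀ ((n : ℝ) - c₀ * s) * (f n).1
     - Real.exp a * (coef c₀ ((n : ℝ) - 1 - c₀ * s) * (f (n - 1)).1))

/-- Elementary bound constant. -/
def C₁ (c₀ a : ℝ) : ℝ := (1 + Real.exp a + Real.exp (-a)) * (1 + Cb c₀)

lemma two_le_C₁ (c₀ a : ℝ) : 2 ≤ C₁ c₀ a := by
  rw [C₁]
  nlinarith [Real.exp_pos a, Real.exp_pos (-a), one_le_Cb c₀]

lemma abs_fst_le (w : ℝ × ℝ) : |w.1| ≤ ‖w‖ := by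
  rw [← Real.norm_eq_abs]; exact norm_fst_le w

lemma abs_snd_le (w : ℝ × ℝ) : |w.2| ≤ ‖w‖ := by
  rw [← Real.norm_eq_abs]; exact norm_snd_le w

lemma norm_pair_le {u v C : ℝ} (h1 : |u| ≤ C) (h2 : |v| ≤ C) : ‖((u, v) : ℝ × ℝ)‖ ≤ C := by
  rw [Prod.norm_def]
  exact max_le (by rwa [Real.norm_eq_abs]) (by rwa [Real.norm_eq_abs])

lemma LmapFun_norm_le (c₀ a s : ℝ) (f : ℤ → ℝ × ℝ) (n : ℤ) :
    ‖LmapFun c₀ a s f n‖ ≤ C₁ c₀ a * (‖f (n - 1)‖ + ‖f n‖ + ‖f (n + 1)‖) := by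
  have hCb := one_le_Cb c₀
  have hea := Real.exp_pos a
  have hena := Real.exp_pos (-a)
  have hb1 := abs_snd_le (f (n + 1))
  have hb2 := abs_snd_le (f n)
  have hb3 := abs_fst_le (f n)
  have hb4 := abs_fst_le (f (n - 1))
  have hn1 := norm_nonneg (f (n - 1))
  have hn2 := norm_nonneg (f n)
  have hn3 := norm_nonneg (f (n + 1))
  have hc1 := coef_pos c₀ ((n : ℝ) - c₀ * s)
  have hc2 := coef_pos c₀ ((n : ℝ) - 1 - c₀ * s)
  have hcb1 := coef_le c₀ ((n : ℝ) - c₀ * s)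
  have hcb2 := coef_le c₀ ((n : ℝ) - 1 - c₀ * s)
  have hC1a : Real.exp (-a) ≤ C₁ c₀ a := by rw [C₁]; nlinarith
  have hC1b : (1:ℝ) ≤ C₁ c₀ a := by linarith [two_le_C₁ c₀ a]
  have hC1c : Cb c₀ ≤ C₁ c₀ a := by rw [C₁]; nlinarith
  have hC1d : Real.exp a * Cb c₀ ≤ C₁ c₀ a := by rw [C₁]; nlinarith
  have hC1pos : (0:ℝ) < C₁ c₀ a := by linarith [two_le_C₁ c₀ a]
  apply norm_pair_le
  · have h0 := abs_sub (Real.exp (-a) * (f (n + 1)).2) ((f n).2)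
    rw [abs_mul, abs_of_pos hena] at h0
    calc |Real.exp (-a) * (f (n + 1)).2 - (f n).2|
        ≤ Real.exp (-a) * |(f (n + 1)).2| + |(f n).2| := h0
      _ ≤ C₁ c₀ a * ‖f (n + 1)‖ + C₁ c₀ a * ‖f n‖ := by
          apply add_le_add
          · calc Real.exp (-a) * |(f (n + 1)).2| ≤ Real.exp (-a) * ‖f (n + 1)‖ :=
                mul_le_mul_of_nonneg_left hb1 hena.le
              _ ≤ C₁ c₀ a * ‖f (n + 1)‖ := mul_le_mul_of_nonneg_right hC1a hn3
          · calc |(f n).2| ≤ ‖f n‖ := hb2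
              _ = 1 * ‖f n‖ := (one_mul _).symm
              _ ≤ C₁ c₀ a * ‖f n‖ := mul_le_mul_of_nonneg_right hC1b hn2
      _ ≤ C₁ c₀ a * (‖f (n - 1)‖ + ‖f n‖ + ‖f (n + 1)‖) := by nlinarith
  · have h0 := abs_sub (coef c₀ ((n : ℝ) - c₀ * s) * (f n).1)
      (Real.exp a * (coef c₀ ((n : ℝ) - 1 - c₀ * s) * (f (n - 1)).1))
    rw [abs_mul, abs_mul, abs_mul, abs_of_pos hea, abs_of_pos hc1, abs_of_pos hc2] at h0
    calc |coef c₀ ((n : ℝ) - c₀ * s) * (f n).1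
        - Real.exp a * (coef c₀ ((n : ℝ) - 1 - c₀ * s) * (f (n - 1)).1)|
        ≤ coef c₀ ((n : ℝ) - c₀ * s) * |(f n).1|
          + Real.exp a * (coef c₀ ((n : ℝ) - 1 - c₀ * s) * |(f (n - 1)).1|) := h0
      _ ≤ C₁ c₀ a * ‖f n‖ + C₁ c₀ a * ‖f (n - 1)‖ := by
          apply add_le_add
          · calc coef c₀ ((n : ℝ) - c₀ * s) * |(f n).1|
                ≤ coef c₀ ((n : ℝ) - c₀ * s) * ‖f n‖ := mul_le_mul_of_nonneg_left hb3 hc1.le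
              _ ≤ Cb c₀ * ‖f n‖ := mul_le_mul_of_nonneg_right hcb1 hn2
              _ ≤ C₁ c₀ a * ‖f n‖ := mul_le_mul_of_nonneg_right hC1c hn2
          · calc Real.exp a * (coef c₀ ((n : ℝ) - 1 - c₀ * s) * |(f (n - 1)).1|)
                ≤ Real.exp a * (Cb c₀ * |(f (n - 1)).1|) := by
                  apply mul_le_mul_of_nonneg_left
                    (mul_le_mul_of_nonneg_right hcb2 (abs_nonneg _)) hea.le
              _ = Real.exp a * Cb c₀ * |(f (n - 1)).1| := by ring
              _ ≤ Real.exp a * Cb c₀ * ‖f (n - 1)‖ := by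
                  apply mul_le_mul_of_nonneg_left hb4 (by positivity)
              _ ≤ C₁ c₀ a * ‖f (n - 1)‖ := mul_le_mul_of_nonneg_right hC1d hn1
      _ ≤ C₁ c₀ a * (‖f (n - 1)‖ + ‖f n‖ + ‖f (n + 1)‖) := by nlinarith

lemma sq_sum3_le (x y z : ℝ) (hx : 0 ≤ x) (hy : 0 ≤ y) (hz : 0 ≤ z) :
    (x + y + z) ^ (2:ℕ) ≤ 3 * (x ^ (2:ℕ) + y ^ (2:ℕ) + z ^ (2:ℕ)) := by
  nlinarith [sq_nonneg (x - y), sq_nonneg (y - z), sq_nonneg (x - z)]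

lemma summable_shift (f : ℤ → ℝ) (d : ℤ) (h : Summable f) :
    Summable (fun n => f (n + d)) :=
  ((Equiv.addRight d).summable_iff).2 h

lemma LmapFun_sq_le (c₀ a s : ℝ) (f : ℤ → ℝ × ℝ) (n : ℤ) :
    ‖LmapFun c₀ a s f n‖ ^ (2:ℕ) ≤ 3 * C₁ c₀ a ^ (2:ℕ) *
      (‖f (n + -1)‖ ^ (2:ℕ) + ‖f n‖ ^ (2:ℕ) + ‖f (n + 1)‖ ^ (2:ℕ)) := by
  have h := LmapFun_norm_le c₀ a s f n
  have hC := two_le_C₁ c₀ a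
  have hsum := sq_sum3_le ‖f (n - 1)‖ ‖f n‖ ‖f (n + 1)‖
    (norm_nonneg _) (norm_nonneg _) (norm_nonneg _)
  have heq : n + -1 = n - 1 := by ring
  rw [heq]
  have h0 : (0:ℝ) ≤ ‖LmapFun c₀ a s f n‖ := norm_nonneg _
  have h1 : ‖LmapFun c₀ a s f n‖ ^ (2:ℕ) ≤
      (C₁ c₀ a * (‖f (n - 1)‖ + ‖f n‖ + ‖f (n + 1)‖)) ^ (2:ℕ) := by
    apply pow_le_pow_left₀ h0 h
  calc ‖LmapFun c₀ a s f n‖ ^ (2:ℕ)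
      ≤ (C₁ c₀ a * (‖f (n - 1)‖ + ‖f n‖ + ‖f (n + 1)‖)) ^ (2:ℕ) := h1
    _ = C₁ c₀ a ^ (2:ℕ) * (‖f (n - 1)‖ + ‖f n‖ + ‖f (n + 1)‖) ^ (2:ℕ) := by ring
    _ ≤ C₁ c₀ a ^ (2:ℕ) * (3 * (‖f (n - 1)‖ ^ (2:ℕ) + ‖f n‖ ^ (2:ℕ) + ‖f (n + 1)‖ ^ (2:ℕ))) := by
        apply mul_le_mul_of_nonneg_left hsum (by positivity)
    _ = 3 * C₁ c₀ a ^ (2:ℕ) * (‖f (n - 1)‖ ^ (2:ℕ) + ‖f n‖ ^ (2:ℕ) + ‖f (n + 1)‖ ^ (2:ℕ)) := by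
        ring

lemma LmapFun_memℓp (c₀ a s : ℝ) (f : ℤ → ℝ × ℝ) (hf : Memℓp f 2) :
    Memℓp (LmapFun c₀ a s f) 2 := by
  rw [memℓp_two_iff] at hf ⊢
  have hm1 := summable_shift (fun n => ‖f n‖ ^ (2:ℕ)) (-1) hf
  have hp1 := summable_shift (fun n => ‖f n‖ ^ (2:ℕ)) 1 hf
  apply Summable.of_nonneg_of_le (fun n => by positivity)
    (fun n => LmapFun_sq_le c₀ a s f n)
  exact ((hm1.add hf).add hp1).mul_left _

end Operator

section CLM

lemma sum_sq_le_norm (g : Eh) (t : Finset ℤ) :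
    ∑ n ∈ t, ‖(g : ℤ → ℝ × ℝ) n‖ ^ (2:ℕ) ≤ ‖g‖ ^ (2:ℕ) := by
  have h := lp.sum_rpow_le_norm_rpow (by norm_num : (0:ℝ) < (2:ENNReal).toReal) g t
  have he : ∀ x : ℝ, x ^ (2:ENNReal).toReal = x ^ (2:ℕ) := fun x => by
    rw [show (2:ENNReal).toReal = ((2:ℕ):ℝ) by norm_num, Real.rpow_natCast]
  calc ∑ n ∈ t, ‖(g : ℤ → ℝ × ℝ) n‖ ^ (2:ℕ)
      = ∑ n ∈ t, ‖(g : ℤ → ℝ × ℝ) n‖ ^ (2:ENNReal).toReal :=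
        Finset.sum_congr rfl fun n _ => (he _).symm
    _ ≤ ‖g‖ ^ (2:ENNReal).toReal := h
    _ = ‖g‖ ^ (2:ℕ) := he _

lemma sum_sq_shift_le_norm (g : Eh) (d : ℤ) (t : Finset ℤ) :
    ∑ n ∈ t, ‖(g : ℤ → ℝ × ℝ) (n + d)‖ ^ (2:ℕ) ≤ ‖g‖ ^ (2:ℕ) := by
  have h : ∑ n ∈ t, ‖(g : ℤ → ℝ × ℝ) (n + d)‖ ^ (2:ℕ)
      = ∑ m ∈ t.map (Equiv.addRight d).toEmbedding, ‖(g : ℤ → ℝ × ℝ) m‖ ^ (2:ℕ) := by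
    rw [Finset.sum_map]
    rfl
  rw [h]
  exact sum_sq_le_norm g _

/-- The linearized Toda vector field as a linear map on `Eh`. -/
def AopL (c₀ a s : ℝ) : Eh →ₗ[ℝ] Eh where
  toFun f := ⟨LmapFun c₀ a s ⇑f, LmapFun_memℓp c₀ a s ⇑f (lp.memℓp f)⟩
  map_add' f g := by
    apply Subtype.ext
    have : ⇑(f + g) = ⇑f + ⇑g := lp.coeFn_add f g
    funext n
    simp only [lp.coeFn_add, Pi.add_apply, LmapFun, this]
    apply Prod.ext <;> simp <;> ring
  map_smul' c f := by
    apply Subtype.ext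
    have : ⇑(c • f) = c • ⇑f := lp.coeFn_smul c f
    funext n
    simp only [lp.coeFn_smul, Pi.smul_apply, LmapFun, this, RingHom.id_apply, smul_eq_mul,
      Prod.smul_mk, Prod.smul_fst, Prod.smul_snd]
    apply Prod.ext <;> simp [Prod.smul_fst, Prod.smul_snd, smul_eq_mul] <;> ring

/-- Uniform operator bound. -/
def Mop (c₀ a : ℝ) : ℝ := 3 * C₁ c₀ a

lemma six_le_Mop (c₀ a : ℝ) : 6 ≤ Mop c₀ a := by
  rw [Mop]; linarith [two_le_C₁ c₀ a]

lemma AopL_norm (c₀ a s : ℝ) (x : Eh) : ‖AopL c₀ a s x‖ ≤ Mop c₀ a * ‖x‖ := by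
  have hM : (0:ℝ) ≤ Mop c₀ a * ‖x‖ := by
    have := six_le_Mop c₀ a
    positivity
  apply lp.norm_le_of_forall_sum_le (by norm_num : (0:ℝ) < (2:ENNReal).toReal) hM
  intro t
  have he : ∀ x : ℝ, x ^ (2:ENNReal).toReal = x ^ (2:ℕ) := fun x => by
    rw [show (2:ENNReal).toReal = ((2:ℕ):ℝ) by norm_num, Real.rpow_natCast]
  have key : ∑ n ∈ t, ‖LmapFun c₀ a s (⇑x) n‖ ^ (2:ℕ) ≤ (Mop c₀ a * ‖x‖) ^ (2:ℕ) := by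
    have h1 : ∑ n ∈ t, ‖LmapFun c₀ a s (⇑x) n‖ ^ (2:ℕ)
        ≤ ∑ n ∈ t, 3 * C₁ c₀ a ^ (2:ℕ) *
          (‖(⇑x) (n + -1)‖ ^ (2:ℕ) + ‖(⇑x) n‖ ^ (2:ℕ) + ‖(⇑x) (n + 1)‖ ^ (2:ℕ)) :=
      Finset.sum_le_sum fun n _ => LmapFun_sq_le c₀ a s (⇑x) n
    have h2 : ∑ n ∈ t, 3 * C₁ c₀ a ^ (2:ℕ) *
          (‖(⇑x) (n + -1)‖ ^ (2:ℕ) + ‖(⇑x) n‖ ^ (2:ℕ) + ‖(⇑x) (n + 1)‖ ^ (2:ℕ))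
        = 3 * C₁ c₀ a ^ (2:ℕ) *
          ((∑ n ∈ t, ‖(⇑x) (n + -1)‖ ^ (2:ℕ)) + (∑ n ∈ t, ‖(⇑x) n‖ ^ (2:ℕ))
            + (∑ n ∈ t, ‖(⇑x) (n + 1)‖ ^ (2:ℕ))) := by
      rw [← Finset.mul_sum]
      congr 1
      rw [← Finset.sum_add_distrib, ← Finset.sum_add_distrib]
    have hs1 := sum_sq_shift_le_norm x (-1) t
    have hs2 := sum_sq_le_norm x t
    have hs3 := sum_sq_shift_le_norm x 1 t
    have hC := two_le_C₁ c₀ a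
    have hxn := norm_nonneg x
    calc ∑ n ∈ t, ‖LmapFun c₀ a s (⇑x) n‖ ^ (2:ℕ)
        ≤ 3 * C₁ c₀ a ^ (2:ℕ) *
          ((∑ n ∈ t, ‖(⇑x) (n + -1)‖ ^ (2:ℕ)) + (∑ n ∈ t, ‖(⇑x) n‖ ^ (2:ℕ))
            + (∑ n ∈ t, ‖(⇑x) (n + 1)‖ ^ (2:ℕ))) := by rw [← h2]; exact h1
      _ ≤ 3 * C₁ c₀ a ^ (2:ℕ) * (‖x‖ ^ (2:ℕ) + ‖x‖ ^ (2:ℕ) + ‖x‖ ^ (2:ℕ)) := by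
          apply mul_le_mul_of_nonneg_left (by linarith) (by positivity)
      _ = 9 * C₁ c₀ a ^ (2:ℕ) * ‖x‖ ^ (2:ℕ) := by ring
      _ = (Mop c₀ a * ‖x‖) ^ (2:ℕ) := by rw [Mop]; ring
  calc ∑ n ∈ t, ‖(↑(AopL c₀ a s x) : ℤ → ℝ × ℝ) n‖ ^ (2:ENNReal).toReal
      = ∑ n ∈ t, ‖LmapFun c₀ a s (⇑x) n‖ ^ (2:ℕ) :=
        Finset.sum_congr rfl fun n _ => he _
    _ ≤ (Mop c₀ a * ‖x‖) ^ (2:ℕ) := key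
    _ = (Mop c₀ a * ‖x‖) ^ (2:ENNReal).toReal := (he _).symm

/-- The linearized Toda vector field as a continuous linear map on `Eh`. -/
def Aop (c₀ a s : ℝ) : Eh →L[ℝ] Eh :=
  LinearMap.mkContinuous (AopL c₀ a s) (Mop c₀ a) (AopL_norm c₀ a s)

lemma Aop_apply_coe (c₀ a s : ℝ) (x : Eh) :
    (↑(Aop c₀ a s x) : ℤ → ℝ × ℝ) = LmapFun c₀ a s ⇑x := rfl

lemma Aop_le (c₀ a s : ℝ) (x : Eh) : ‖Aop c₀ a s x‖ ≤ Mop c₀ a * ‖x‖ :=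
  AopL_norm c₀ a s x

end CLM

section ContT

lemma Aop_diff_le (c₀ a : ℝ) (hc : 0 ≤ c₀) (s s' : ℝ) (x : Eh) :
    ‖Aop c₀ a s x - Aop c₀ a s' x‖ ≤ 2 * (1 + Real.exp a) * (Lc c₀ * c₀) * |s - s'| * ‖x‖ := by
  set ε : ℝ := Lc c₀ * c₀ * |s - s'| with hε
  have hεnn : 0 ≤ ε := by
    have := Lc_nonneg c₀
    positivity
  have hC : (0:ℝ) ≤ 2 * (1 + Real.exp a) * (Lc c₀ * c₀) * |s - s'| * ‖x‖ := by
    have := Lc_nonneg c₀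
    positivity
  -- pointwise estimate
  have hpt : ∀ n : ℤ, ‖(↑(Aop c₀ a s x - Aop c₀ a s' x) : ℤ → ℝ × ℝ) n‖
      ≤ ε * ‖(⇑x) n‖ + Real.exp a * ε * ‖(⇑x) (n + -1)‖ := by
    intro n
    have hcoe : (↑(Aop c₀ a s x - Aop c₀ a s' x) : ℤ → ℝ × ℝ)
        = (↑(Aop c₀ a s x) : ℤ → ℝ × ℝ) - (↑(Aop c₀ a s' x) : ℤ → ℝ × ℝ) :=
      lp.coeFn_sub _ _
    rw [hcoe]
    have hval : ((↑(Aop c₀ a s x) : ℤ → ℝ × ℝ) - (↑(Aop c₀ a s' x) : ℤ → ℝ × ℝ)) n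
        = (0, (coef c₀ ((n:ℝ) - c₀*s) - coef c₀ ((n:ℝ) - c₀*s')) * ((⇑x) n).1
            - Real.exp a * ((coef c₀ ((n:ℝ) - 1 - c₀*s) - coef c₀ ((n:ℝ) - 1 - c₀*s'))
              * ((⇑x) (n-1)).1)) := by
      rw [Pi.sub_apply, Aop_apply_coe, Aop_apply_coe, LmapFun, LmapFun]
      apply Prod.ext <;> simp <;> ring
    rw [hval]
    have hd1 : |coef c₀ ((n:ℝ) - c₀*s) - coef c₀ ((n:ℝ) - c₀*s')| ≤ ε := by
      have h := coef_lip c₀ ((n:ℝ) - c₀*s) ((n:ℝ) - c₀*s')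
      have he : |((n:ℝ) - c₀*s) - ((n:ℝ) - c₀*s')| = c₀ * |s - s'| := by
        rw [show ((n:ℝ) - c₀*s) - ((n:ℝ) - c₀*s') = c₀ * (s' - s) by ring, abs_mul,
          abs_of_nonneg hc, abs_sub_comm]
      rw [he] at h
      calc |_ - _| ≤ Lc c₀ * (c₀ * |s - s'|) := h
        _ = ε := by rw [hε]; ring
    have hd2 : |coef c₀ ((n:ℝ) - 1 - c₀*s) - coef c₀ ((n:ℝ) - 1 - c₀*s')| ≤ ε := by
      have h := coef_lip c₀ ((n:ℝ) - 1 - c₀*s) ((n:ℝ) - 1 - c₀*s')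
      have he : |((n:ℝ) - 1 - c₀*s) - ((n:ℝ) - 1 - c₀*s')| = c₀ * |s - s'| := by
        rw [show ((n:ℝ) - 1 - c₀*s) - ((n:ℝ) - 1 - c₀*s') = c₀ * (s' - s) by ring, abs_mul,
          abs_of_nonneg hc, abs_sub_comm]
      rw [he] at h
      calc |_ - _| ≤ Lc c₀ * (c₀ * |s - s'|) := h
        _ = ε := by rw [hε]; ring
    have hb1 := abs_fst_le ((⇑x) n)
    have hb2 := abs_fst_le ((⇑x) (n-1))
    have hea := Real.exp_pos a
    have heq : (n : ℤ) + -1 = n - 1 := by ring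
    rw [heq]
    apply norm_pair_le
    · have hnn : 0 ≤ ε * ‖(⇑x) n‖ + Real.exp a * ε * ‖(⇑x) (n - 1)‖ := by positivity
      simpa using hnn
    · have h0 := abs_sub ((coef c₀ ((n:ℝ) - c₀*s) - coef c₀ ((n:ℝ) - c₀*s')) * ((⇑x) n).1)
        (Real.exp a * ((coef c₀ ((n:ℝ) - 1 - c₀*s) - coef c₀ ((n:ℝ) - 1 - c₀*s'))
          * ((⇑x) (n-1)).1))
      rw [abs_mul, abs_mul, abs_mul, abs_of_pos hea] at h0
      calc |_| ≤ _ := h0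
        _ ≤ ε * ‖(⇑x) n‖ + Real.exp a * ε * ‖(⇑x) (n - 1)‖ := by
          apply add_le_add
          · apply mul_le_mul hd1 (hb1.trans (le_refl _)) (abs_nonneg _)
              hεnn
          · rw [mul_assoc]
            apply mul_le_mul_of_nonneg_left _ hea.le
            apply mul_le_mul hd2 hb2 (abs_nonneg _) hεnn
  -- now the ℓ² estimate
  apply lp.norm_le_of_forall_sum_le (by norm_num : (0:ℝ) < (2:ENNReal).toReal) hC
  intro t
  have he : ∀ x : ℝ, x ^ (2:ENNReal).toReal = x ^ (2:ℕ) := fun x => by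
    rw [show (2:ENNReal).toReal = ((2:ℕ):ℝ) by norm_num, Real.rpow_natCast]
  have key : ∑ n ∈ t, ‖(↑(Aop c₀ a s x - Aop c₀ a s' x) : ℤ → ℝ × ℝ) n‖ ^ (2:ℕ)
      ≤ (2 * (1 + Real.exp a) * (Lc c₀ * c₀) * |s - s'| * ‖x‖) ^ (2:ℕ) := by
    have hsq : ∀ n : ℤ, ‖(↑(Aop c₀ a s x - Aop c₀ a s' x) : ℤ → ℝ × ℝ) n‖ ^ (2:ℕ)
        ≤ 2 * (ε^(2:ℕ) * ‖(⇑x) n‖^(2:ℕ) + (Real.exp a * ε)^(2:ℕ) * ‖(⇑x) (n + -1)‖^(2:ℕ)) := by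
      intro n
      have h := hpt n
      have h2 : ‖(↑(Aop c₀ a s x - Aop c₀ a s' x) : ℤ → ℝ × ℝ) n‖ ^ (2:ℕ)
          ≤ (ε * ‖(⇑x) n‖ + Real.exp a * ε * ‖(⇑x) (n + -1)‖) ^ (2:ℕ) :=
        pow_le_pow_left₀ (norm_nonneg _) h 2
      calc ‖(↑(Aop c₀ a s x - Aop c₀ a s' x) : ℤ → ℝ × ℝ) n‖ ^ (2:ℕ)
          ≤ (ε * ‖(⇑x) n‖ + Real.exp a * ε * ‖(⇑x) (n + -1)‖) ^ (2:ℕ) := h2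
        _ ≤ 2 * (ε^(2:ℕ) * ‖(⇑x) n‖^(2:ℕ) + (Real.exp a * ε)^(2:ℕ) * ‖(⇑x) (n + -1)‖^(2:ℕ)) := by
            nlinarith [sq_nonneg (ε * ‖(⇑x) n‖ - Real.exp a * ε * ‖(⇑x) (n + -1)‖)]
    have h1 : ∑ n ∈ t, ‖(↑(Aop c₀ a s x - Aop c₀ a s' x) : ℤ → ℝ × ℝ) n‖ ^ (2:ℕ)
        ≤ ∑ n ∈ t, 2 * (ε^(2:ℕ) * ‖(⇑x) n‖^(2:ℕ) + (Real.exp a * ε)^(2:ℕ) *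
            ‖(⇑x) (n + -1)‖^(2:ℕ)) :=
      Finset.sum_le_sum fun n _ => hsq n
    have h2 : ∑ n ∈ t, 2 * (ε^(2:ℕ) * ‖(⇑x) n‖^(2:ℕ) + (Real.exp a * ε)^(2:ℕ) *
            ‖(⇑x) (n + -1)‖^(2:ℕ))
        = 2 * ε^(2:ℕ) * (∑ n ∈ t, ‖(⇑x) n‖^(2:ℕ))
          + 2 * (Real.exp a * ε)^(2:ℕ) * (∑ n ∈ t, ‖(⇑x) (n + -1)‖^(2:ℕ)) := by
      rw [← Finset.mul_sum, Finset.sum_add_distrib, ← Finset.mul_sum, ← Finset.mul_sum]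
      ring
    have hs1 := sum_sq_le_norm x t
    have hs2 := sum_sq_shift_le_norm x (-1) t
    have hexp := Real.exp_pos a
    calc ∑ n ∈ t, ‖(↑(Aop c₀ a s x - Aop c₀ a s' x) : ℤ → ℝ × ℝ) n‖ ^ (2:ℕ)
        ≤ 2 * ε^(2:ℕ) * (∑ n ∈ t, ‖(⇑x) n‖^(2:ℕ))
          + 2 * (Real.exp a * ε)^(2:ℕ) * (∑ n ∈ t, ‖(⇑x) (n + -1)‖^(2:ℕ)) := by
          rw [← h2]; exact h1
      _ ≤ 2 * ε^(2:ℕ) * ‖x‖^(2:ℕ) + 2 * (Real.exp a * ε)^(2:ℕ) * ‖x‖^(2:ℕ) := by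
          apply add_le_add <;> apply mul_le_mul_of_nonneg_left _ (by positivity)
          · exact hs1
          · exact hs2
      _ ≤ (2 * (1 + Real.exp a) * ε * ‖x‖) ^ (2:ℕ) := by
          nlinarith [norm_nonneg x, sq_nonneg ε, sq_nonneg ‖x‖, mul_nonneg hεnn (norm_nonneg x),
            sq_nonneg (ε * ‖x‖)]
      _ = (2 * (1 + Real.exp a) * (Lc c₀ * c₀) * |s - s'| * ‖x‖) ^ (2:ℕ) := by
          rw [hε]; ring
  calc ∑ n ∈ t, ‖(↑(Aop c₀ a s x - Aop c₀ a s' x) : ℤ → ℝ × ℝ) n‖ ^ (2:ENNReal).toReal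
      = ∑ n ∈ t, ‖(↑(Aop c₀ a s x - Aop c₀ a s' x) : ℤ → ℝ × ℝ) n‖ ^ (2:ℕ) :=
        Finset.sum_congr rfl fun n _ => he _
    _ ≤ (2 * (1 + Real.exp a) * (Lc c₀ * c₀) * |s - s'| * ‖x‖) ^ (2:ℕ) := key
    _ = (2 * (1 + Real.exp a) * (Lc c₀ * c₀) * |s - s'| * ‖x‖) ^ (2:ENNReal).toReal := (he _).symm

lemma Aop_cont_t (c₀ a : ℝ) (hc : 0 ≤ c₀) (x : Eh) :
    Continuous (fun s => Aop c₀ a s x) := by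
  set C : ℝ := 2 * (1 + Real.exp a) * (Lc c₀ * c₀) * ‖x‖ with hCdef
  have hCnn : 0 ≤ C := by
    have := Lc_nonneg c₀
    positivity
  have h : ∀ s s' : ℝ, dist (Aop c₀ a s x) (Aop c₀ a s' x) ≤ (C.toNNReal : ℝ) * dist s s' := by
    intro s s'
    rw [dist_eq_norm, Real.dist_eq, Real.coe_toNNReal C hCnn]
    calc ‖Aop c₀ a s x - Aop c₀ a s' x‖
        ≤ 2 * (1 + Real.exp a) * (Lc c₀ * c₀) * |s - s'| * ‖x‖ := Aop_diff_le c₀ a hc s s' x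
      _ = C * |s - s'| := by rw [hCdef]; ring
  exact (LipschitzWith.of_dist_le_mul h).continuous

end ContT

section Eval

/-- Coordinate evaluation as a continuous linear map `Eh →L[ℝ] ℝ × ℝ`. -/
def evalCLM (n : ℤ) : Eh →L[ℝ] ℝ × ℝ :=
  LinearMap.mkContinuous
    { toFun := fun f => (f : ℤ → ℝ × ℝ) n
      map_add' := fun f g => by
        show (↑(f + g) : ℤ → ℝ × ℝ) n = (↑f : ℤ → ℝ × ℝ) n + (↑g : ℤ → ℝ × ℝ) n
        rw [lp.coeFn_add]; rfl
      map_smul' := fun c f => by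
        show (↑(c • f) : ℤ → ℝ × ℝ) n = c • (↑f : ℤ → ℝ × ℝ) n
        rw [lp.coeFn_smul]; rfl }
    1 (fun f => by simpa using lp.norm_apply_le_norm (by norm_num : (2:ENNReal) ≠ 0) f n)

lemma evalCLM_apply (n : ℤ) (f : Eh) : evalCLM n f = (f : ℤ → ℝ × ℝ) n := rfl

end Eval

section Step

lemma PL_step (c₀ a : ℝ) (hc : 0 ≤ c₀) (t0 : ℝ) (x₀ : Eh) :
    ∃ f : ℝ → Eh, f t0 = x₀ ∧ ∀ t ∈ Icc t0 (t0 + (Mop c₀ a)⁻¹ / 2),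
      HasDerivWithinAt f (Aop c₀ a t (f t)) (Icc t0 (t0 + (Mop c₀ a)⁻¹ / 2)) t := by
  set δ : ℝ := (Mop c₀ a)⁻¹ / 2 with hδ
  have hMop : (6:ℝ) ≤ Mop c₀ a := six_le_Mop c₀ a
  have hMpos : (0:ℝ) < Mop c₀ a := by linarith
  have hδpos : 0 < δ := by positivity
  have hpl : IsPicardLindelof (fun t x => Aop c₀ a t x)
      (⟨t0, ⟨le_refl _, by linarith⟩⟩ : Icc t0 (t0 + δ)) x₀
      (‖x₀‖₊ + 1) 0 (Mop c₀ a * (2 * ‖x₀‖ + 1)).toNNReal (Mop c₀ a).toNNReal := by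
    constructor
    · intro t _
      apply LipschitzOnWith.of_dist_le_mul
      intro u _ v _
      rw [dist_eq_norm, dist_eq_norm, Real.coe_toNNReal _ hMpos.le, ← map_sub]
      exact Aop_le c₀ a t (u - v)
    · intro x _
      exact (Aop_cont_t c₀ a hc x).continuousOn
    · intro t _ x hx
      have hxn : ‖x‖ ≤ 2 * ‖x₀‖ + 1 := by
        have := mem_closedBall_iff_norm.1 hx
        push_cast at this
        calc ‖x‖ = ‖x - x₀ + x₀‖ := by rw [sub_add_cancel]
          _ ≤ ‖x - x₀‖ + ‖x₀‖ := norm_add_le _ _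
          _ ≤ 2 * ‖x₀‖ + 1 := by linarith [norm_nonneg x₀]
      rw [Real.coe_toNNReal _ (by positivity)]
      calc ‖Aop c₀ a t x‖ ≤ Mop c₀ a * ‖x‖ := Aop_le c₀ a t x
        _ ≤ Mop c₀ a * (2 * ‖x₀‖ + 1) := mul_le_mul_of_nonneg_left hxn hMpos.le
    · have hmax : max (t0 + δ - t0) (t0 - t0) = δ := by
        rw [max_eq_left (by linarith)]; ring
      simp only [hmax]
      rw [Real.coe_toNNReal _ (by positivity)]
      have : Mop c₀ a * (2 * ‖x₀‖ + 1) * δ = (2 * ‖x₀‖ + 1) / 2 := by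
        rw [hδ]
        field_simp
      rw [this]
      push_cast
      linarith [norm_nonneg x₀]
  exact hpl.exists_eq_forall_mem_Icc_hasDerivWithinAt₀

set_option maxHeartbeats 1600000 in
lemma global_fwd (c₀ a : ℝ) (hc : 0 ≤ c₀) (s₁ : ℝ) (x₀ : Eh) :
    ∃ F : ℝ → Eh, F s₁ = x₀ ∧
      (∀ s ∈ Ici s₁, HasDerivWithinAt F (Aop c₀ a s (F s)) (Ici s₁) s) ∧
      (∀ s, s₁ < s → HasDerivAt F (Aop c₀ a s (F s)) s) := by
  classical
  set δ : ℝ := (Mop c₀ a)⁻¹ / 2 with hδ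
  have hMop : (6:ℝ) ≤ Mop c₀ a := six_le_Mop c₀ a
  have hMpos : (0:ℝ) < Mop c₀ a := by linarith
  have hδpos : 0 < δ := by positivity
  choose g hg0 hgd using fun (t0 : ℝ) (x : Eh) => PL_step c₀ a hc t0 x
  set X : ℕ → Eh := fun k =>
    Nat.rec x₀ (fun k xk => g (s₁ + k * δ) xk (s₁ + (k + 1) * δ)) k with hX
  set sol : ℕ → ℝ → Eh := fun k => g (s₁ + k * δ) (X k) with hsol
  have hsol0 : ∀ k : ℕ, sol k (s₁ + k * δ) = X k := fun k => hg0 _ _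
  have hsolStep : ∀ k : ℕ, sol k (s₁ + (k + 1) * δ) = X (k + 1) := fun k => rfl
  have hsold : ∀ k : ℕ, ∀ t ∈ Icc (s₁ + k * δ) (s₁ + k * δ + δ),
      HasDerivWithinAt (sol k) (Aop c₀ a t (sol k t)) (Icc (s₁ + k * δ) (s₁ + k * δ + δ)) t :=
    fun k => hgd _ _
  set Kf : ℝ → ℕ := fun s => ⌊(s - s₁) / δ⌋₊ with hKf
  set F : ℝ → Eh := fun s => sol (Kf s) s with hF
  -- the floor computation
  have hKeq : ∀ (k : ℕ) (s : ℝ), s₁ + k * δ ≤ s → s < s₁ + (k + 1) * δ → Kf s = k := by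
    intro k s h1 h2
    rw [hKf]
    have hnn : 0 ≤ (s - s₁) / δ := by
      apply div_nonneg _ hδpos.le
      have : (0:ℝ) ≤ k * δ := by positivity
      linarith
    rw [Nat.floor_eq_iff hnn]
    constructor
    · rw [le_div_iff₀ hδpos]; linarith
    · rw [div_lt_iff₀ hδpos]; push_cast; linarith
  -- F agrees with sol k on the k-th interval
  have hFeq : ∀ (k : ℕ), ∀ s ∈ Icc (s₁ + k * δ) (s₁ + k * δ + δ), F s = sol k s := by
    intro k s hs
    rcases lt_or_eq_of_le hs.2 with h | h
    · show sol (Kf s) s = sol k s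
      rw [hKeq k s hs.1 (by push_cast; linarith)]
    · -- right endpoint
      have hKs : Kf s = k + 1 := by
        apply hKeq (k + 1) s
        · push_cast; linarith
        · push_cast; linarith
      show sol (Kf s) s = sol k s
      rw [hKs]
      have h1 := hsol0 (k + 1)
      push_cast at h1
      have h2 : sol k (s₁ + ((k:ℝ) + 1) * δ) = X (k + 1) := hsolStep k
      have hs' : s = s₁ + ((k:ℝ) + 1) * δ := by push_cast at h ⊢; linarith
      rw [hs', h2, hs'] at *
      exact h1
  -- derivative of F within the k-th interval
  have hFd : ∀ (k : ℕ), ∀ s ∈ Icc (s₁ + k * δ) (s₁ + k * δ + δ),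
      HasDerivWithinAt F (Aop c₀ a s (F s)) (Icc (s₁ + k * δ) (s₁ + k * δ + δ)) s := by
    intro k s hs
    have h := (hsold k s hs).congr (hFeq k) (hFeq k s hs)
    rwa [hFeq k s hs]
  have hmem : ∀ s, s₁ ≤ s → s₁ + (Kf s : ℝ) * δ ≤ s ∧ s < s₁ + (Kf s : ℝ) * δ + δ := by
    intro s hs
    have hnn : 0 ≤ (s - s₁) / δ := div_nonneg (by linarith) hδpos.le
    constructor
    · have := Nat.floor_le hnn
      rw [le_div_iff₀ hδpos] at this
      linarith
    · have := Nat.lt_floor_add_one ((s - s₁) / δ)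
      rw [div_lt_iff₀ hδpos] at this
      linarith
  have hF3 : ∀ s, s₁ < s → HasDerivAt F (Aop c₀ a s (F s)) s := by
    intro s hs
    obtain ⟨hL, hR⟩ := hmem s hs.le
    rcases lt_or_eq_of_le hL with h | h
    · -- interior of the Kf s interval
      exact (hFd (Kf s) s ⟨hL, by linarith⟩).hasDerivAt
        (Icc_mem_nhds h (by linarith))
    · -- junction point: s = s₁ + Kf s * δ with Kf s ≥ 1
      have hKpos : Kf s ≠ 0 := by
        intro h0
        rw [h0] at h
        push_cast at h
        linarith
      obtain ⟨m, hm⟩ := Nat.exists_eq_succ_of_ne_zero hKpos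
      have hright : HasDerivWithinAt F (Aop c₀ a s (F s)) (Ici s) s := by
        apply (hFd (Kf s) s ⟨hL, by linarith⟩).mono_of_mem_nhdsWithin
        apply Icc_mem_nhdsGE_of_mem
        exact ⟨hL, by linarith⟩
      have hleft : HasDerivWithinAt F (Aop c₀ a s (F s)) (Iic s) s := by
        have hs2 : s ∈ Icc (s₁ + m * δ) (s₁ + m * δ + δ) := by
          constructor
          · rw [← h, hm]; push_cast; nlinarith
          · rw [← h, hm]; push_cast; nlinarith
        apply (hFd m s hs2).mono_of_mem_nhdsWithin
        apply Icc_mem_nhdsLE_of_mem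
        constructor
        · rw [← h, hm]; push_cast; nlinarith
        · rw [← h, hm]; push_cast; nlinarith
      have := hleft.union hright
      rwa [Iic_union_Ici, hasDerivWithinAt_univ] at this
  refine ⟨F, ?_, ?_, hF3⟩
  · have h0 : F s₁ = sol 0 s₁ := by
      apply hFeq 0 s₁
      constructor <;> push_cast <;> [linarith; linarith]
    rw [h0]
    have := hsol0 0
    have he : s₁ + (0:ℕ) * δ = s₁ := by push_cast; ring
    rw [he] at this
    rw [this]
    rfl
  · intro s hs
    rcases lt_or_eq_of_le (mem_Ici.1 hs) with h | h
    · exact (hF3 s h).hasDerivWithinAt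
    · subst h
      have hs2 : s₁ ∈ Icc (s₁ + ((0:ℕ):ℝ) * δ) (s₁ + ((0:ℕ):ℝ) * δ + δ) := by
        constructor <;> push_cast <;> [linarith; linarith]
      apply (hFd 0 s₁ hs2).mono_of_mem_nhdsWithin
      apply Icc_mem_nhdsGE_of_mem
      constructor <;> push_cast <;> [linarith; linarith]

end Step

section Sigma

lemma hasDerivWithinAt_of_inverse {f σ : ℝ → ℝ} {S : Set ℝ} {s₀ d : ℝ}
    (hs₀ : s₀ ∈ S) (hσc : ContinuousWithinAt σ S s₀) (hf : HasDerivAt f d (σ s₀))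
    (hd : d ≠ 0) (hid : ∀ s ∈ S, f (σ s) = s) :
    HasDerivWithinAt σ d⁻¹ S s₀ := by
  rw [hasDerivWithinAt_iff_tendsto_slope]
  have hfs : Tendsto (slope f (σ s₀)) (𝓝[≠] (σ s₀)) (𝓝 d) :=
    hasDerivAt_iff_tendsto_slope.1 hf
  have hne : ∀ s ∈ S \ {s₀}, σ s ≠ σ s₀ := by
    intro s hs hcon
    apply hs.2
    have h1 := hid s hs.1
    rw [hcon, hid s₀ hs₀] at h1
    exact h1.symm
  have hσt : Tendsto σ (𝓝[S \ {s₀}] s₀) (𝓝[≠] (σ s₀)) := by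
    rw [nhdsWithin]
    apply tendsto_inf.2
    constructor
    · exact hσc.tendsto.mono_left (nhdsWithin_mono s₀ diff_subset)
    · apply tendsto_principal.2
      filter_upwards [self_mem_nhdsWithin] with s hs
      exact mem_compl_singleton_iff.2 (hne s hs)
  have hcomp : Tendsto (fun s => slope f (σ s₀) (σ s)) (𝓝[S \ {s₀}] s₀) (𝓝 d) :=
    hfs.comp hσt
  have hinv := hcomp.inv₀ hd
  apply hinv.congr'
  filter_upwards [self_mem_nhdsWithin] with s hs
  rw [slope_def_field, slope_def_field, hid s hs.1, hid s₀ hs₀, inv_div]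

lemma sigma_exists {γ γ' : ℝ → ℝ} {τ t₀ : ℝ} (hτt : τ < t₀)
    (hd : ∀ t ∈ Icc τ t₀, HasDerivAt γ (γ' t) t)
    (hpos : ∀ t ∈ Icc τ t₀, (1:ℝ)/2 ≤ γ' t) :
    ∃ σ : ℝ → ℝ, Continuous σ ∧ (∀ s ∈ Icc (γ τ) (γ t₀), σ s ∈ Icc τ t₀ ∧ γ (σ s) = s) ∧
      σ (γ τ) = τ ∧ σ (γ t₀) = t₀ := by
  have hcont : ContinuousOn γ (Icc τ t₀) := fun t ht =>
    (hd t ht).continuousAt.continuousWithinAt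
  have hmono : StrictMonoOn γ (Icc τ t₀) := by
    apply strictMonoOn_of_deriv_pos (convex_Icc τ t₀) hcont
    intro x hx
    rw [interior_Icc] at hx
    have hx' : x ∈ Icc τ t₀ := Ioo_subset_Icc_self hx
    rw [(hd x hx').deriv]
    linarith [hpos x hx']
  have hIVT : Icc (γ τ) (γ t₀) ⊆ γ '' Icc τ t₀ := intermediate_value_Icc hτt.le hcont
  set σ₀ : ℝ → ℝ := fun s => Function.invFunOn γ (Icc τ t₀) s with hσ₀
  have hprop : ∀ s ∈ Icc (γ τ) (γ t₀), σ₀ s ∈ Icc τ t₀ ∧ γ (σ₀ s) = s := by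
    intro s hs
    obtain ⟨t, ht, hts⟩ := hIVT hs
    exact ⟨Function.invFunOn_mem ⟨t, ht, hts⟩, Function.invFunOn_eq ⟨t, ht, hts⟩⟩
  have hττ : τ ∈ Icc τ t₀ := ⟨le_refl _, hτt.le⟩
  have ht₀t₀ : t₀ ∈ Icc τ t₀ := ⟨hτt.le, le_refl _⟩
  have hγle : γ τ ≤ γ t₀ := (hmono.le_iff_le hττ ht₀t₀).2 hτt.le
  have hσγ : ∀ t ∈ Icc τ t₀, σ₀ (γ t) = t := by
    intro t ht
    have hmem : γ t ∈ Icc (γ τ) (γ t₀) :=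
      ⟨(hmono.le_iff_le hττ ht).2 ht.1, (hmono.le_iff_le ht ht₀t₀).2 ht.2⟩
    obtain ⟨hin, heq⟩ := hprop (γ t) hmem
    exact hmono.injOn hin ht heq
  have hmonoσ : ∀ u ∈ Icc (γ τ) (γ t₀), ∀ v ∈ Icc (γ τ) (γ t₀), u ≤ v → σ₀ u ≤ σ₀ v := by
    intro u hu v hv huv
    obtain ⟨hu1, hu2⟩ := hprop u hu
    obtain ⟨hv1, hv2⟩ := hprop v hv
    apply (hmono.le_iff_le hu1 hv1).1
    rw [hu2, hv2]; exact huv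
  set σ : ℝ → ℝ := fun s =>
    if s < γ τ then τ + (s - γ τ) else if s ≤ γ t₀ then σ₀ s else t₀ + (s - γ t₀) with hσdef
  have hσIcc : ∀ s ∈ Icc (γ τ) (γ t₀), σ s = σ₀ s := by
    intro s hs
    show (if s < γ τ then τ + (s - γ τ) else if s ≤ γ t₀ then σ₀ s else t₀ + (s - γ t₀)) = σ₀ s
    rw [if_neg (not_lt.2 hs.1), if_pos hs.2]
  have hmonoglob : Monotone σ := by
    intro u v huv
    show (if u < γ τ then τ + (u - γ τ) else if u ≤ γ t₀ then σ₀ u else t₀ + (u - γ t₀))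
      ≤ (if v < γ τ then τ + (v - γ τ) else if v ≤ γ t₀ then σ₀ v else t₀ + (v - γ t₀))
    rcases lt_or_ge u (γ τ) with hu | hu
    · rw [if_pos hu]
      rcases lt_or_ge v (γ τ) with hv | hv
      · rw [if_pos hv]; linarith
      · rw [if_neg (not_lt.2 hv)]
        rcases le_or_gt v (γ t₀) with hv2 | hv2
        · rw [if_pos hv2]
          have := (hprop v ⟨hv, hv2⟩).1.1
          linarith
        · rw [if_neg (not_le.2 hv2)]; linarith
    · rw [if_neg (not_lt.2 hu)]
      have hvγ : ¬ v < γ τ := not_lt.2 (le_trans hu huv)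
      rw [if_neg hvγ]
      rcases le_or_gt u (γ t₀) with hu2 | hu2
      · rw [if_pos hu2]
        rcases le_or_gt v (γ t₀) with hv2 | hv2
        · rw [if_pos hv2]
          exact hmonoσ u ⟨hu, hu2⟩ v ⟨le_trans hu huv, hv2⟩ huv
        · rw [if_neg (not_le.2 hv2)]
          have := (hprop u ⟨hu, hu2⟩).1.2
          linarith
      · rw [if_neg (not_le.2 hu2), if_neg (not_le.2 (lt_of_lt_of_le hu2 huv))]
        linarith
  have hsurj : Function.Surjective σ := by
    intro y
    rcases lt_or_ge y τ with hy | hy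
    · refine ⟨γ τ + (y - τ), ?_⟩
      show (if γ τ + (y - τ) < γ τ then τ + (γ τ + (y - τ) - γ τ) else _) = y
      rw [if_pos (by linarith)]
      ring
    · rcases le_or_gt y t₀ with hy2 | hy2
      · refine ⟨γ y, ?_⟩
        have hmem : γ y ∈ Icc (γ τ) (γ t₀) :=
          ⟨(hmono.le_iff_le hττ ⟨hy, hy2⟩).2 hy, (hmono.le_iff_le ⟨hy, hy2⟩ ht₀t₀).2 hy2⟩
        rw [hσIcc (γ y) hmem]
        exact hσγ y ⟨hy, hy2⟩
      · refine ⟨γ t₀ + (y - t₀), ?_⟩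
        have h1 : ¬ γ t₀ + (y - t₀) < γ τ := by
          push_neg
          linarith
        have h2 : ¬ γ t₀ + (y - t₀) ≤ γ t₀ := by
          push_neg
          linarith
        show (if γ t₀ + (y - t₀) < γ τ then _ else if γ t₀ + (y - t₀) ≤ γ t₀ then _
          else t₀ + (γ t₀ + (y - t₀) - γ t₀)) = y
        rw [if_neg h1, if_neg h2]
        ring
  refine ⟨σ, hmonoglob.continuous_of_surjective hsurj, ?_, ?_, ?_⟩
  · intro s hs
    rw [hσIcc s hs]
    exact hprop s hs
  · rw [hσIcc (γ τ) ⟨le_refl _, hγle⟩]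
    exact hσγ τ hττ
  · rw [hσIcc (γ t₀) ⟨hγle, le_refl _⟩]
    exact hσγ t₀ ht₀t₀

lemma gamma_lower {γ γ' : ℝ → ℝ} {τ t₀ : ℝ} (hτt : τ ≤ t₀)
    (hd : ∀ t ∈ Icc τ t₀, HasDerivAt γ (γ' t) t)
    (hpos : ∀ t ∈ Icc τ t₀, (1:ℝ)/2 ≤ γ' t) :
    (t₀ - τ) / 2 ≤ γ t₀ - γ τ := by
  set g : ℝ → ℝ := fun t => γ t - t / 2 with hg
  have hdg : ∀ t ∈ Icc τ t₀, HasDerivAt g (γ' t - 1/2) t := by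
    intro t ht
    have h1 : HasDerivAt (fun t : ℝ => t / 2) (1/2) t := by
      simpa using (hasDerivAt_id t).div_const 2
    exact (hd t ht).sub h1
  have hmg : MonotoneOn g (Icc τ t₀) := by
    apply monotoneOn_of_deriv_nonneg (convex_Icc τ t₀)
    · intro t ht
      exact (hdg t ht).continuousAt.continuousWithinAt
    · intro t ht
      rw [interior_Icc] at ht
      exact ((hdg t (Ioo_subset_Icc_self ht)).differentiableAt).differentiableWithinAt
    · intro t ht
      rw [interior_Icc] at ht
      rw [(hdg t (Ioo_subset_Icc_self ht)).deriv]
      linarith [hpos t (Ioo_subset_Icc_self ht)]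
  have := hmg ⟨le_refl _, hτt⟩ ⟨hτt, le_refl _⟩ hτt
  have hgτ : g τ = γ τ - τ / 2 := rfl
  have hgt : g t₀ = γ t₀ - t₀ / 2 := rfl
  rw [hgτ, hgt] at this
  linarith

end Sigma

section Glue

set_option maxHeartbeats 1600000 in
lemma glue (c₀ a s₀ s₁ : ℝ) (hc : 0 ≤ c₀) (hss : s₀ ≤ s₁) (w_mid : ℝ → ℤ → ℝ × ℝ)
    (hmemmid : ∀ s ∈ Icc s₀ s₁, Meml2w a (w_mid s))
    (hder1 : ∀ s ∈ Icc s₀ s₁, ∀ n : ℤ, HasDerivWithinAt (fun s' => (w_mid s' n).1)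
        ((w_mid s (n+1)).2 - (w_mid s n).2) (Icc s₀ s₁) s)
    (hder2 : ∀ s ∈ Icc s₀ s₁, ∀ n : ℤ, HasDerivWithinAt (fun s' => (w_mid s' n).2)
        (coef c₀ ((n:ℝ) - c₀ * s) * (w_mid s n).1
          - coef c₀ ((n:ℝ) - 1 - c₀ * s) * (w_mid s (n-1)).1) (Icc s₀ s₁) s) :
    ∃ w : ℝ → ℤ → ℝ × ℝ, w s₀ = w_mid s₀ ∧ w s₁ = w_mid s₁ ∧ IsLinTodaSol c₀ s₀ w ∧
      ∀ s, s₀ ≤ s → Meml2w a (w s) := by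
  obtain ⟨F, hF0, hFI, hFD⟩ :=
    global_fwd c₀ a hc s₁ (toEh a (w_mid s₁) (hmemmid s₁ ⟨hss, le_refl _⟩))
  set wF : ℝ → ℤ → ℝ × ℝ := fun s => unwt a ⇑(F s) with hwF
  have hwFs₁ : wF s₁ = w_mid s₁ := by
    show unwt a ⇑(F s₁) = w_mid s₁
    rw [hF0]
    exact unwt_toEh a (w_mid s₁) _
  set D : ℤ → ℝ × ℝ := fun n => ((w_mid s₀ (n+1)).2 - (w_mid s₀ n).2,
    coef c₀ ((n:ℝ) - c₀ * s₀) * (w_mid s₀ n).1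
      - coef c₀ ((n:ℝ) - 1 - c₀ * s₀) * (w_mid s₀ (n-1)).1) with hD
  set wA : ℝ → ℤ → ℝ × ℝ := fun s n => ((w_mid s₀ n).1 + (s - s₀) * (D n).1,
    (w_mid s₀ n).2 + (s - s₀) * (D n).2) with hwA
  set w : ℝ → ℤ → ℝ × ℝ := fun s => if s < s₀ then wA s else if s ≤ s₁ then w_mid s else wF s
    with hw
  have hw_mid : ∀ s ∈ Icc s₀ s₁, w s = w_mid s := by
    intro s hs
    show (if s < s₀ then wA s else if s ≤ s₁ then w_mid s else wF s) = w_mid s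
    rw [if_neg (not_lt.2 hs.1), if_pos hs.2]
  have hw₀ : w s₀ = w_mid s₀ := hw_mid s₀ ⟨le_refl _, hss⟩
  have hw₁ : w s₁ = w_mid s₁ := hw_mid s₁ ⟨hss, le_refl _⟩
  have hwIci : ∀ s ∈ Ici s₁, w s = wF s := by
    intro s hs
    rcases eq_or_lt_of_le (mem_Ici.1 hs) with h | h
    · rw [← h, hw₁, hwFs₁]
    · show (if s < s₀ then wA s else if s ≤ s₁ then w_mid s else wF s) = wF s
      rw [if_neg (not_lt.2 (le_trans hss h.le)), if_neg (not_le.2 h)]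
  have hwIic : ∀ s ∈ Iic s₀, w s = wA s := by
    intro s hs
    rcases eq_or_lt_of_le (mem_Iic.1 hs) with h | h
    · rw [h, hw₀]
      funext n
      show w_mid s₀ n
        = ((w_mid s₀ n).1 + (s₀ - s₀) * (D n).1, (w_mid s₀ n).2 + (s₀ - s₀) * (D n).2)
      apply Prod.ext <;> simp
    · show (if s < s₀ then wA s else if s ≤ s₁ then w_mid s else wF s) = wA s
      rw [if_pos h]
  -- coordinatewise derivative of the forward piece
  have hcoordF : ∀ (S : Set ℝ) (s : ℝ), HasDerivWithinAt F (Aop c₀ a s (F s)) S s →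
      ∀ n : ℤ, HasDerivWithinAt (fun s' => (wF s' n).1) ((wF s (n+1)).2 - (wF s n).2) S s ∧
        HasDerivWithinAt (fun s' => (wF s' n).2)
          (coef c₀ ((n:ℝ) - c₀ * s) * (wF s n).1
            - coef c₀ ((n:ℝ) - 1 - c₀ * s) * (wF s (n-1)).1) S s := by
    intro S s hDer n
    have hEv : ∀ m : ℤ, HasDerivWithinAt (fun s' => (⇑(F s') : ℤ → ℝ × ℝ) m)
        ((⇑(Aop c₀ a s (F s)) : ℤ → ℝ × ℝ) m) S s := fun m =>
      (evalCLM m).hasFDerivAt.comp_hasDerivWithinAt s hDer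
    constructor
    · have h1 : HasDerivWithinAt (fun s' => ((⇑(F s') : ℤ → ℝ × ℝ) n).1)
          (((⇑(Aop c₀ a s (F s)) : ℤ → ℝ × ℝ) n).1) S s :=
        (ContinuousLinearMap.fst ℝ ℝ ℝ).hasFDerivAt.comp_hasDerivWithinAt s (hEv n)
      have h2 := h1.const_mul (Real.exp (-(a * n)))
      have hfun : (fun s' => Real.exp (-(a * n)) * ((⇑(F s') : ℤ → ℝ × ℝ) n).1)
          = fun s' => (wF s' n).1 := by
        funext s'
        show _ = (unwt a ⇑(F s') n).1
        rw [unwt]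
        simp [smul_eq_mul]
      rw [hfun] at h2
      have hval : Real.exp (-(a * n)) * ((⇑(Aop c₀ a s (F s)) : ℤ → ℝ × ℝ) n).1
          = (wF s (n+1)).2 - (wF s n).2 := by
        rw [Aop_apply_coe]
        show Real.exp (-(a * n)) *
            (Real.exp (-a) * ((⇑(F s) : ℤ → ℝ × ℝ) (n + 1)).2 - ((⇑(F s) : ℤ → ℝ × ℝ) n).2)
          = (unwt a ⇑(F s) (n+1)).2 - (unwt a ⇑(F s) n).2
        rw [unwt, unwt]
        simp only [smul_eq_mul, Prod.smul_snd]
        push_cast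
        rw [show -(a * ((n:ℝ) + 1)) = -(a * n) + -a by ring, Real.exp_add]
        ring
      rwa [hval] at h2
    · have h1 : HasDerivWithinAt (fun s' => ((⇑(F s') : ℤ → ℝ × ℝ) n).2)
          (((⇑(Aop c₀ a s (F s)) : ℤ → ℝ × ℝ) n).2) S s :=
        (ContinuousLinearMap.snd ℝ ℝ ℝ).hasFDerivAt.comp_hasDerivWithinAt s (hEv n)
      have h2 := h1.const_mul (Real.exp (-(a * n)))
      have hfun : (fun s' => Real.exp (-(a * n)) * ((⇑(F s') : ℤ → ℝ × ℝ) n).2)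
          = fun s' => (wF s' n).2 := by
        funext s'
        show _ = (unwt a ⇑(F s') n).2
        rw [unwt]
        simp [smul_eq_mul]
      rw [hfun] at h2
      have hval : Real.exp (-(a * n)) * ((⇑(Aop c₀ a s (F s)) : ℤ → ℝ × ℝ) n).2
          = coef c₀ ((n:ℝ) - c₀ * s) * (wF s n).1
            - coef c₀ ((n:ℝ) - 1 - c₀ * s) * (wF s (n-1)).1 := by
        rw [Aop_apply_coe]
        show Real.exp (-(a * n)) *
            (coef c₀ ((n:ℝ) - c₀ * s) * ((⇑(F s) : ℤ → ℝ × ℝ) n).1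
              - Real.exp a * (coef c₀ ((n:ℝ) - 1 - c₀ * s) * ((⇑(F s) : ℤ → ℝ × ℝ) (n - 1)).1))
          = coef c₀ ((n:ℝ) - c₀ * s) * (unwt a ⇑(F s) n).1
            - coef c₀ ((n:ℝ) - 1 - c₀ * s) * (unwt a ⇑(F s) (n-1)).1
        rw [unwt, unwt]
        simp only [smul_eq_mul, Prod.smul_fst]
        push_cast
        rw [show -(a * ((n:ℝ) - 1)) = -(a * n) + a by ring, Real.exp_add]
        ring
      rwa [hval] at h2
  -- the affine piece
  have hA : ∀ n : ℤ,
      HasDerivWithinAt (fun s' => (wA s' n).1) ((D n).1) (Iic s₀) s₀ ∧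
      HasDerivWithinAt (fun s' => (wA s' n).2) ((D n).2) (Iic s₀) s₀ := by
    intro n
    constructor
    · have h := (((hasDerivAt_id s₀).sub_const s₀).mul_const ((D n).1)).const_add
        ((w_mid s₀ n).1)
      have h2 : HasDerivAt (fun s' => (wA s' n).1) ((D n).1) s₀ := by
        simpa [hwA] using h
      exact h2.hasDerivWithinAt
    · have h := (((hasDerivAt_id s₀).sub_const s₀).mul_const ((D n).2)).const_add
        ((w_mid s₀ n).2)
      have h2 : HasDerivAt (fun s' => (wA s' n).2) ((D n).2) s₀ := by
        simpa [hwA] using h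
      exact h2.hasDerivWithinAt
  refine ⟨w, hw₀, hw₁, ?_, ?_⟩
  · -- IsLinTodaSol
    intro t ht n
    rcases eq_or_lt_of_le ht with rfl | hts₀
    · -- t = s₀ : the initial-time junction
      -- left pieces (affine), transported to w
      have hL1 : HasDerivWithinAt (fun s' => (w s' n).1) ((D n).1) (Iic s₀) s₀ := by
        apply (hA n).1.congr (fun x hx => by simp only [hwIic x hx]) (by simp only [hwIic s₀ (mem_Iic.2 (le_refl _))])
      have hL2 : HasDerivWithinAt (fun s' => (w s' n).2) ((D n).2) (Iic s₀) s₀ := by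
        apply (hA n).2.congr (fun x hx => by simp only [hwIic x hx]) (by simp only [hwIic s₀ (mem_Iic.2 (le_refl _))])
      rcases eq_or_lt_of_le hss with hdeg | hlt
      · -- degenerate s₀ = s₁
        have hder := hFI s₁ (mem_Ici.2 (le_refl _))
        have hcoords := hcoordF (Ici s₁) s₁ hder n
        have hR1 : HasDerivWithinAt (fun s' => (w s' n).1)
            ((wF s₁ (n+1)).2 - (wF s₁ n).2) (Ici s₁) s₁ :=
          hcoords.1.congr (fun x hx => by simp only [hwIci x hx]) (by simp only [hwIci s₁ (mem_Ici.2 (le_refl _))])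
        have hR2 : HasDerivWithinAt (fun s' => (w s' n).2)
            (coef c₀ ((n:ℝ) - c₀ * s₁) * (wF s₁ n).1
              - coef c₀ ((n:ℝ) - 1 - c₀ * s₁) * (wF s₁ (n-1)).1) (Ici s₁) s₁ :=
          hcoords.2.congr (fun x hx => by simp only [hwIci x hx]) (by simp only [hwIci s₁ (mem_Ici.2 (le_refl _))])
        have hvals1 : (wF s₁ (n+1)).2 - (wF s₁ n).2 = (D n).1 := by
          rw [hwFs₁, hD, ← hdeg]
        have hvals2 : coef c₀ ((n:ℝ) - c₀ * s₁) * (wF s₁ n).1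
            - coef c₀ ((n:ℝ) - 1 - c₀ * s₁) * (wF s₁ (n-1)).1 = (D n).2 := by
          rw [hwFs₁, hD, ← hdeg]
        rw [hvals1] at hR1
        rw [hvals2] at hR2
        rw [← hdeg] at hR1 hR2
        constructor
        · have hu := hL1.union hR1
          rw [Iic_union_Ici, hasDerivWithinAt_univ] at hu
          have : (D n).1 = (w s₀ (n+1)).2 - (w s₀ n).2 := by simp only [hw₀, hD]
          rwa [this] at hu
        · have hu := hL2.union hR2
          rw [Iic_union_Ici, hasDerivWithinAt_univ] at hu
          have : (D n).2 = coef c₀ ((n:ℝ) - c₀ * s₀) * (w s₀ n).1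
              - coef c₀ ((n:ℝ) - 1 - c₀ * s₀) * (w s₀ (n-1)).1 := by simp only [hw₀, hD]
          rwa [this] at hu
      · -- s₀ < s₁ : right piece is `w_mid`
        have hmemIcc : Icc s₀ s₁ ∈ 𝓝[Ici s₀] s₀ :=
          Icc_mem_nhdsGE_of_mem ⟨le_refl _, hlt⟩
        have hR1 : HasDerivWithinAt (fun s' => (w s' n).1)
            ((w_mid s₀ (n+1)).2 - (w_mid s₀ n).2) (Ici s₀) s₀ := by
          apply HasDerivWithinAt.mono_of_mem_nhdsWithin _ hmemIcc
          exact (hder1 s₀ ⟨le_refl _, hss⟩ n).congr (fun x hx => by simp only [hw_mid x hx])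
            (by simp only [hw_mid s₀ ⟨le_refl _, hss⟩])
        have hR2 : HasDerivWithinAt (fun s' => (w s' n).2)
            (coef c₀ ((n:ℝ) - c₀ * s₀) * (w_mid s₀ n).1
              - coef c₀ ((n:ℝ) - 1 - c₀ * s₀) * (w_mid s₀ (n-1)).1) (Ici s₀) s₀ := by
          apply HasDerivWithinAt.mono_of_mem_nhdsWithin _ hmemIcc
          exact (hder2 s₀ ⟨le_refl _, hss⟩ n).congr (fun x hx => by simp only [hw_mid x hx])
            (by simp only [hw_mid s₀ ⟨le_refl _, hss⟩])
        have hvals1 : (w_mid s₀ (n+1)).2 - (w_mid s₀ n).2 = (D n).1 := by rw [hD]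
        have hvals2 : coef c₀ ((n:ℝ) - c₀ * s₀) * (w_mid s₀ n).1
            - coef c₀ ((n:ℝ) - 1 - c₀ * s₀) * (w_mid s₀ (n-1)).1 = (D n).2 := by rw [hD]
        rw [hvals1] at hR1
        rw [hvals2] at hR2
        constructor
        · have hu := hL1.union hR1
          rw [Iic_union_Ici, hasDerivWithinAt_univ] at hu
          have : (D n).1 = (w s₀ (n+1)).2 - (w s₀ n).2 := by simp only [hw₀, hD]
          rwa [this] at hu
        · have hu := hL2.union hR2
          rw [Iic_union_Ici, hasDerivWithinAt_univ] at hu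
          have : (D n).2 = coef c₀ ((n:ℝ) - c₀ * s₀) * (w s₀ n).1
              - coef c₀ ((n:ℝ) - 1 - c₀ * s₀) * (w s₀ (n-1)).1 := by simp only [hw₀, hD]
          rwa [this] at hu
    · -- s₀ < t
      rcases lt_trichotomy t s₁ with h | heq | h
      · -- interior : s₀ < t < s₁
        have hmem' : Icc s₀ s₁ ∈ 𝓝 t := Icc_mem_nhds hts₀ h
        have htIcc : t ∈ Icc s₀ s₁ := ⟨hts₀.le, h.le⟩
        have hev : ∀ᶠ s' in 𝓝 t, w s' = w_mid s' := by
          filter_upwards [Ioo_mem_nhds hts₀ h] with s' hs'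
          exact hw_mid s' (Ioo_subset_Icc_self hs')
        constructor
        · have h0 := ((hder1 t htIcc n).hasDerivAt hmem').congr_of_eventuallyEq
            (by filter_upwards [hev] with s' h' using congrArg (fun u => (u n).1) h')
          rw [hw_mid t htIcc]
          exact h0
        · have h0 := ((hder2 t htIcc n).hasDerivAt hmem').congr_of_eventuallyEq
            (by filter_upwards [hev] with s' h' using congrArg (fun u => (u n).2) h')
          rw [hw_mid t htIcc]
          exact h0
      · -- t = s₁ > s₀ : the second junction
        rw [heq]
        rw [heq] at hts₀
        have hIic : Icc s₀ s₁ ∈ 𝓝[Iic s₁] s₁ := Icc_mem_nhdsLE_of_mem ⟨hts₀, le_refl _⟩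
        have hs₁Icc : s₁ ∈ Icc s₀ s₁ := ⟨hss, le_refl _⟩
        have hder := hFI s₁ (mem_Ici.2 (le_refl _))
        have hcoords := hcoordF (Ici s₁) s₁ hder n
        constructor
        · have hL : HasDerivWithinAt (fun s' => (w s' n).1)
              ((w_mid s₁ (n+1)).2 - (w_mid s₁ n).2) (Iic s₁) s₁ := by
            apply HasDerivWithinAt.mono_of_mem_nhdsWithin _ hIic
            exact (hder1 s₁ hs₁Icc n).congr (fun x hx => by simp only [hw_mid x hx])
              (by simp only [hw_mid s₁ hs₁Icc])
          have hR : HasDerivWithinAt (fun s' => (w s' n).1)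
              ((w_mid s₁ (n+1)).2 - (w_mid s₁ n).2) (Ici s₁) s₁ := by
            have h9 : HasDerivWithinAt (fun s' => (w s' n).1)
                ((wF s₁ (n+1)).2 - (wF s₁ n).2) (Ici s₁) s₁ :=
              hcoords.1.congr (fun x hx => by simp only [hwIci x hx])
                (by simp only [hwIci s₁ (mem_Ici.2 (le_refl _))])
            rwa [hwFs₁] at h9
          have hu := hL.union hR
          rw [Iic_union_Ici, hasDerivWithinAt_univ] at hu
          rw [hw₁]
          exact hu
        · have hL : HasDerivWithinAt (fun s' => (w s' n).2)
              (coef c₀ ((n:ℝ) - c₀ * s₁) * (w_mid s₁ n).1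
                - coef c₀ ((n:ℝ) - 1 - c₀ * s₁) * (w_mid s₁ (n-1)).1) (Iic s₁) s₁ := by
            apply HasDerivWithinAt.mono_of_mem_nhdsWithin _ hIic
            exact (hder2 s₁ hs₁Icc n).congr (fun x hx => by simp only [hw_mid x hx])
              (by simp only [hw_mid s₁ hs₁Icc])
          have hR : HasDerivWithinAt (fun s' => (w s' n).2)
              (coef c₀ ((n:ℝ) - c₀ * s₁) * (w_mid s₁ n).1
                - coef c₀ ((n:ℝ) - 1 - c₀ * s₁) * (w_mid s₁ (n-1)).1) (Ici s₁) s₁ := by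
            have h9 : HasDerivWithinAt (fun s' => (w s' n).2)
                (coef c₀ ((n:ℝ) - c₀ * s₁) * (wF s₁ n).1
                  - coef c₀ ((n:ℝ) - 1 - c₀ * s₁) * (wF s₁ (n-1)).1) (Ici s₁) s₁ :=
              hcoords.2.congr (fun x hx => by simp only [hwIci x hx])
                (by simp only [hwIci s₁ (mem_Ici.2 (le_refl _))])
            rwa [hwFs₁] at h9
          have hu := hL.union hR
          rw [Iic_union_Ici, hasDerivWithinAt_univ] at hu
          rw [hw₁]
          exact hu
      · -- t > s₁ : inside the forward piece
        have hder := hFD t h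
        have hcoords := hcoordF univ t hder.hasDerivWithinAt n
        have hev : ∀ᶠ s' in 𝓝 t, w s' = wF s' := by
          filter_upwards [Ioi_mem_nhds h] with s' hs'
          exact hwIci s' (mem_Ici.2 (le_of_lt hs'))
        have hwt : w t = wF t := hwIci t (mem_Ici.2 h.le)
        constructor
        · have h0 := (hasDerivWithinAt_univ.1 hcoords.1).congr_of_eventuallyEq
            (by filter_upwards [hev] with s' h' using congrArg (fun u => (u n).1) h')
          rw [hwt]
          exact h0
        · have h0 := (hasDerivWithinAt_univ.1 hcoords.2).congr_of_eventuallyEq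
            (by filter_upwards [hev] with s' h' using congrArg (fun u => (u n).2) h')
          rw [hwt]
          exact h0
  · -- membership
    intro s hs
    rcases le_or_gt s s₁ with h | h
    · rw [hw_mid s ⟨hs, h⟩]
      exact hmemmid s ⟨hs, h⟩
    · rw [hwIci s (mem_Ici.2 h.le)]
      exact meml2w_unwt a (F s)

end Glue

lemma hasDerivWithinAt_singleton' (f : ℝ → ℝ) (x d : ℝ) : HasDerivWithinAt f d {x} x := by
  rw [hasDerivWithinAt_iff_tendsto_slope, diff_self, nhdsWithin_empty]
  exact tendsto_bot
/-- Decay for the modulated non-autonomous linearized Toda equation. -/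
theorem modulated_linearized_decay (c₀ a b K : ℝ) (hc₀ : 1 < c₀)
    (ha : 0 < a) (ha2 : a < 2 * kappa c₀)
    (hb : 0 < b) (hb2 : b < c₀ * a - 2 * Real.sinh (a / 2))
    (hK : 0 < K) (hKest : LinDecayEst c₀ a b K)
    (T : EReal) (hT : (0 : EReal) ≤ T)
    (γ γ' : ℝ → ℝ)
    (hγ : ∀ t : ℝ, 0 ≤ t → (t : EReal) ≤ T → HasDerivAt γ (γ' t) t)
    (hγc : ContinuousOn γ' {t : ℝ | 0 ≤ t ∧ (t : EReal) ≤ T})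
    (hγ' : ∀ t : ℝ, 0 ≤ t → (t : EReal) ≤ T → 1 / 2 ≤ γ' t)
    (τ : ℝ) (hτ : 0 ≤ τ) (hτT : (τ : EReal) ≤ T)
    (φ : ℤ → ℝ × ℝ) (hφ : Meml2w a φ)
    (horth1 : pairing φ (Jinv (ucDot c₀ (γ τ))) = 0)
    (horth2 : pairing φ (Jinv (ucDc c₀ (γ τ))) = 0)
    (v : ℝ → ℤ → ℝ × ℝ)
    (hode : ∀ t : ℝ, τ ≤ t → (t : EReal) ≤ T → ∀ n : ℤ,
      HasDerivAt (fun s => (v s n).1) (γ' t * ((v t (n + 1)).2 - (v t n).2)) t ∧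
      HasDerivAt (fun s => (v s n).2)
        (γ' t * (Real.exp (-(rtil c₀ ((n : ℝ) - c₀ * γ t))) * (v t n).1
          - Real.exp (-(rtil c₀ ((n : ℝ) - 1 - c₀ * γ t))) * (v t (n - 1)).1)) t)
    (hmem : ∀ t : ℝ, τ ≤ t → (t : EReal) ≤ T → Meml2w a (v t))
    (hvτ : v τ = φ) :
    ∀ t : ℝ, τ ≤ t → (t : EReal) ≤ T →
      Real.exp (-(a * c₀ * γ t)) * wnorm a (v t) ≤
        K * Real.exp (-(b * (t - τ) / 2)) * (Real.exp (-(a * c₀ * γ τ)) * wnorm a φ) := by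
  intro t₀ hτt₀ ht₀T
  have hc0 : (0:ℝ) ≤ c₀ := by linarith
  have hsub : ∀ t ∈ Icc τ t₀, 0 ≤ t ∧ (t : EReal) ≤ T := fun t ht =>
    ⟨le_trans hτ ht.1, le_trans (EReal.coe_le_coe_iff.2 ht.2) ht₀T⟩
  have hdIcc : ∀ t ∈ Icc τ t₀, HasDerivAt γ (γ' t) t := fun t ht =>
    hγ t (hsub t ht).1 (hsub t ht).2
  have hpIcc : ∀ t ∈ Icc τ t₀, (1:ℝ)/2 ≤ γ' t := fun t ht =>
    hγ' t (hsub t ht).1 (hsub t ht).2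
  have hγτt₀ : (t₀ - τ) / 2 ≤ γ t₀ - γ τ := gamma_lower hτt₀ hdIcc hpIcc
  have hγmono : γ τ ≤ γ t₀ := by linarith
  have main : ∃ w : ℝ → ℤ → ℝ × ℝ, w (γ τ) = φ ∧ w (γ t₀) = v t₀ ∧
      IsLinTodaSol c₀ (γ τ) w ∧ ∀ s, γ τ ≤ s → Meml2w a (w s) := by
    rcases eq_or_lt_of_le hτt₀ with rfl | hlt
    · -- degenerate case t₀ = τ
      obtain ⟨w, hw0, hw1, hsol, hmem'⟩ := glue c₀ a (γ τ) (γ τ) hc0 (le_refl _) (fun _ => φ)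
        (fun s _ => hφ)
        (fun s hs n => by
          have hIccs : Icc (γ τ) (γ τ) = {γ τ} := Icc_self _
          rw [hIccs] at hs ⊢
          obtain rfl := mem_singleton_iff.1 hs
          exact hasDerivWithinAt_singleton' _ _ _)
        (fun s hs n => by
          have hIccs : Icc (γ τ) (γ τ) = {γ τ} := Icc_self _
          rw [hIccs] at hs ⊢
          obtain rfl := mem_singleton_iff.1 hs
          exact hasDerivWithinAt_singleton' _ _ _)
      exact ⟨w, hw0, by rw [hw1, hvτ], hsol, hmem'⟩
    · -- main case τ < t₀
      obtain ⟨σ, hσcont, hσprop, hστ, hσt₀⟩ := sigma_exists hlt hdIcc hpIcc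
      have hder1 : ∀ s ∈ Icc (γ τ) (γ t₀), ∀ n : ℤ,
          HasDerivWithinAt (fun s' => (v (σ s') n).1)
            ((v (σ s) (n+1)).2 - (v (σ s) n).2) (Icc (γ τ) (γ t₀)) s := by
        intro s hs n
        obtain ⟨hσmem, hγσ⟩ := hσprop s hs
        have h0 := hsub (σ s) hσmem
        have hodeσ := hode (σ s) hσmem.1 h0.2 n
        have hγ'pos : (0:ℝ) < γ' (σ s) := by linarith [hpIcc (σ s) hσmem]
        have hσder : HasDerivWithinAt σ ((γ' (σ s))⁻¹) (Icc (γ τ) (γ t₀)) s :=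
          hasDerivWithinAt_of_inverse hs (hσcont.continuousWithinAt)
            (hdIcc (σ s) hσmem) hγ'pos.ne' (fun u hu => (hσprop u hu).2)
        have hcomp := (hodeσ.1).comp_hasDerivWithinAt s hσder
        have hval : γ' (σ s) * ((v (σ s) (n + 1)).2 - (v (σ s) n).2) * (γ' (σ s))⁻¹
            = (v (σ s) (n+1)).2 - (v (σ s) n).2 := by
          field_simp
        rwa [hval] at hcomp
      have hder2 : ∀ s ∈ Icc (γ τ) (γ t₀), ∀ n : ℤ,
          HasDerivWithinAt (fun s' => (v (σ s') n).2)
            (coef c₀ ((n:ℝ) - c₀ * s) * (v (σ s) n).1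
              - coef c₀ ((n:ℝ) - 1 - c₀ * s) * (v (σ s) (n-1)).1) (Icc (γ τ) (γ t₀)) s := by
        intro s hs n
        obtain ⟨hσmem, hγσ⟩ := hσprop s hs
        have h0 := hsub (σ s) hσmem
        have hodeσ := hode (σ s) hσmem.1 h0.2 n
        have hγ'pos : (0:ℝ) < γ' (σ s) := by linarith [hpIcc (σ s) hσmem]
        have hσder : HasDerivWithinAt σ ((γ' (σ s))⁻¹) (Icc (γ τ) (γ t₀)) s :=
          hasDerivWithinAt_of_inverse hs (hσcont.continuousWithinAt)
            (hdIcc (σ s) hσmem) hγ'pos.ne' (fun u hu => (hσprop u hu).2)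
        have hcomp := (hodeσ.2).comp_hasDerivWithinAt s hσder
        have hval : γ' (σ s) * (Real.exp (-(rtil c₀ ((n:ℝ) - c₀ * γ (σ s)))) * (v (σ s) n).1
              - Real.exp (-(rtil c₀ ((n:ℝ) - 1 - c₀ * γ (σ s)))) * (v (σ s) (n - 1)).1)
              * (γ' (σ s))⁻¹
            = coef c₀ ((n:ℝ) - c₀ * s) * (v (σ s) n).1
              - coef c₀ ((n:ℝ) - 1 - c₀ * s) * (v (σ s) (n-1)).1 := by
          rw [hγσ, coef, coef]
          field_simp
        rwa [hval] at hcomp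
      obtain ⟨w, hw0, hw1, hsol, hmem'⟩ := glue c₀ a (γ τ) (γ t₀) hc0 hγmono
        (fun s => v (σ s))
        (fun s hs => hmem (σ s) (hσprop s hs).1.1 (hsub (σ s) (hσprop s hs).1).2)
        hder1 hder2
      refine ⟨w, ?_, ?_, hsol, hmem'⟩
      · rw [hw0, hστ, hvτ]
      · rw [hw1, hσt₀]
  obtain ⟨w, hwτ, hwt₀, hsol, hmemw⟩ := main
  have horth1' : pairing (w (γ τ)) (Jinv (ucDot c₀ (γ τ))) = 0 := by rw [hwτ]; exact horth1
  have horth2' : pairing (w (γ τ)) (Jinv (ucDc c₀ (γ τ))) = 0 := by rw [hwτ]; exact horth2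
  have hest := hKest (γ τ) w hsol hmemw horth1' horth2' (γ t₀) hγmono
  rw [hwτ, hwt₀] at hest
  have hwn0 : 0 ≤ wnorm a φ := Real.sqrt_nonneg _
  have hexple : Real.exp (-(b * (γ t₀ - γ τ))) ≤ Real.exp (-(b * (t₀ - τ) / 2)) := by
    apply Real.exp_le_exp.2
    have h1 : b * ((t₀ - τ) / 2) ≤ b * (γ t₀ - γ τ) :=
      mul_le_mul_of_nonneg_left hγτt₀ hb.le
    nlinarith
  calc Real.exp (-(a * c₀ * γ t₀)) * wnorm a (v t₀)
      = Real.exp (-(a * c₀ * γ τ)) * (Real.exp (-(a * c₀ * (γ t₀ - γ τ))) * wnorm a (v t₀)) := by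
        rw [← mul_assoc, ← Real.exp_add,
          show -(a * c₀ * γ τ) + -(a * c₀ * (γ t₀ - γ τ)) = -(a * c₀ * γ t₀) by ring]
    _ ≤ Real.exp (-(a * c₀ * γ τ)) * (K * Real.exp (-(b * (γ t₀ - γ τ))) * wnorm a φ) :=
        mul_le_mul_of_nonneg_left hest (Real.exp_pos _).le
    _ = (Real.exp (-(a * c₀ * γ τ)) * wnorm a φ * K) * Real.exp (-(b * (γ t₀ - γ τ))) := by
        ring
    _ ≤ (Real.exp (-(a * c₀ * γ τ)) * wnorm a φ * K) * Real.exp (-(b * (t₀ - τ) / 2)) := by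
        apply mul_le_mul_of_nonneg_left hexple
        positivity
    _ = K * Real.exp (-(b * (t₀ - τ) / 2)) * (Real.exp (-(a * c₀ * γ τ)) * wnorm a φ) := by
        ring

end

end TodaPaper
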